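/- arXiv:2107.03042 — 7 statements merged into one kernel-verified Lean document; each statement's English description precedes it below -/
import Mathlib

section
/- Let k_d = 1/(2d-1) and X = k_d(X_1 + X_2 + X_4 + X_5 + X_7 + X_8) where X_1,…,X_9 are the standard phase-covariant basis operators on (ℂ^d)^{⊗3}. Then X is positive semidefinite and Tr_{23} X = 𝟙_d. -/
open scoped BigOperators ComplexOrder
open Matrix

noncomputable section

/-- Matrix unit `|p⟩⟨q|` on the triple-index space. -/
def E3 (d : ℕ) (p q : Fin d × Fin d × Fin d) :
    Matrix (Fin d × Fin d × Fin d) (Fin d × Fin d × Fin d) ℂ :=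
  Matrix.single p q 1

def X1 (d : ℕ) := ∑ i : Fin d, E3 d (i,i,i) (i,i,i)

def X2 (d : ℕ) := ∑ i : Fin d, ∑ k : Fin d,
  if i ≠ k then E3 d (i,i,k) (i,i,k) + E3 d (i,k,i) (i,k,i) else 0

def X3 (d : ℕ) := ∑ i : Fin d, ∑ k : Fin d,
  if i ≠ k then E3 d (k,i,i) (k,i,i) else 0

def X4 (d : ℕ) := ∑ i : Fin d, ∑ k : Fin d,
  if i ≠ k then E3 d (k,i,k) (i,i,i) + E3 d (i,i,i) (k,i,k)
    + E3 d (k,k,i) (i,i,i) + E3 d (i,i,i) (k,k,i) else 0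

def X5 (d : ℕ) := ∑ i : Fin d, ∑ k : Fin d,
  if i ≠ k then E3 d (i,i,k) (i,k,i) + E3 d (i,k,i) (i,i,k) else 0

def X6 (d : ℕ) := ∑ i : Fin d, ∑ k : Fin d, ∑ l : Fin d,
  if i ≠ k ∧ k ≠ l ∧ i ≠ l then E3 d (i,k,l) (i,k,l) else 0

def X7 (d : ℕ) := ∑ i : Fin d, ∑ k : Fin d, ∑ l : Fin d,
  if i ≠ k ∧ k ≠ l ∧ i ≠ l then E3 d (k,k,l) (i,l,i) + E3 d (l,k,l) (i,i,k) else 0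

def X8 (d : ℕ) := ∑ i : Fin d, ∑ k : Fin d, ∑ l : Fin d,
  if i ≠ k ∧ k ≠ l ∧ i ≠ l then E3 d (k,k,l) (i,i,l) + E3 d (l,k,l) (i,k,i) else 0

def X9 (d : ℕ) := ∑ i : Fin d, ∑ k : Fin d, ∑ l : Fin d,
  if i ≠ k ∧ k ≠ l ∧ i ≠ l then E3 d (i,k,l) (i,l,k) else 0

/-- Partial trace over the second and third tensor factors. -/
def ptrace23 (d : ℕ)
    (M : Matrix (Fin d × Fin d × Fin d) (Fin d × Fin d × Fin d) ℂ) :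
    Matrix (Fin d) (Fin d) ℂ :=
  Matrix.of fun i l => ∑ j : Fin d, ∑ k : Fin d, M (i,j,k) (l,j,k)

/-- The projection `(φ_d^+)^{⊗3}`, whose entries are all `1/d³`. -/
def Phi3 (d : ℕ) : Matrix (Fin d × Fin d × Fin d) (Fin d × Fin d × Fin d) ℂ :=
  Matrix.of fun _ _ => 1 / (d : ℂ)^3

end

noncomputable section Aux

namespace CloningAux

variable {d : ℕ}

lemma mite_apply {α β : Type*} (P : Prop) [Decidable P] (M N : Matrix α β ℂ) (p : α) (q : β) :
    (if P then M else N) p q = if P then M p q else N p q := by split <;> rfl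

lemma ite_ite_and (A B : Prop) [Decidable A] [Decidable B] :
    (if A then (if B then (1:ℂ) else 0) else 0) = if A ∧ B then 1 else 0 := (ite_and A B 1 0).symm

lemma ite_add_zero' (A : Prop) [Decidable A] (x y : ℂ) :
    (if A then x + y else 0) = (if A then x else 0) + (if A then y else 0) := by
  split <;> simp

lemma sum1 (P : Fin d → Prop) [DecidablePred P] (i0 : Fin d) (Q : Prop) [Decidable Q]
    (h : ∀ i, P i ↔ i = i0 ∧ Q) :
    (∑ i : Fin d, if P i then (1:ℂ) else 0) = if Q then 1 else 0 := by
  simp only [h, ite_and, Finset.sum_ite_eq', Finset.mem_univ, if_true]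

lemma sum2 (P : Fin d → Fin d → Prop) [∀ i k, Decidable (P i k)] (i0 k0 : Fin d)
    (Q : Prop) [Decidable Q] (h : ∀ i k, P i k ↔ k = k0 ∧ i = i0 ∧ Q) :
    (∑ i : Fin d, ∑ k : Fin d, if P i k then (1:ℂ) else 0) = if Q then 1 else 0 := by
  simp only [h, ite_and, Finset.sum_ite_eq', Finset.mem_univ, if_true]

lemma sum3 (P : Fin d → Fin d → Fin d → Prop) [∀ i k l, Decidable (P i k l)]
    (i0 k0 l0 : Fin d) (Q : Prop) [Decidable Q]
    (h : ∀ i k l, P i k l ↔ l = l0 ∧ k = k0 ∧ i = i0 ∧ Q) :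
    (∑ i : Fin d, ∑ k : Fin d, ∑ l : Fin d, if P i k l then (1:ℂ) else 0)
      = if Q then 1 else 0 := by
  simp only [h, ite_and, Finset.sum_ite_eq', Finset.mem_univ, if_true]

lemma X1_apply (a b c a' b' c' : Fin d) :
    X1 d (a,b,c) (a',b',c') =
      (if a = b ∧ a = c ∧ a' = a ∧ b' = a ∧ c' = a then (1:ℂ) else 0) := by
  unfold X1 E3
  simp only [Matrix.sum_apply, Matrix.single, Matrix.of_apply, Prod.mk.injEq]
  rw [sum1 _ a (a = b ∧ a = c ∧ a' = a ∧ b' = a ∧ c' = a)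
    (fun i => by constructor <;> rintro ⟨h1, h2⟩ <;> aesop)]

lemma X2_apply (a b c a' b' c' : Fin d) :
    X2 d (a,b,c) (a',b',c') =
      (if a = b ∧ a' = a ∧ b' = a ∧ c' = c ∧ a ≠ c then (1:ℂ) else 0)
      + (if a = c ∧ a' = a ∧ b' = b ∧ c' = a ∧ a ≠ b then 1 else 0) := by
  unfold X2 E3
  simp only [Matrix.sum_apply, mite_apply, Matrix.zero_apply, Matrix.add_apply,
    Matrix.single, Matrix.of_apply, Prod.mk.injEq]
  simp only [ite_add_zero', Finset.sum_add_distrib, ite_ite_and]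
  rw [sum2 _ a c (a = b ∧ a' = a ∧ b' = a ∧ c' = c ∧ a ≠ c)
        (fun i k => by constructor <;> rintro ⟨h1, h2⟩ <;> aesop),
      sum2 _ a b (a = c ∧ a' = a ∧ b' = b ∧ c' = a ∧ a ≠ b)
        (fun i k => by constructor <;> rintro ⟨h1, h2⟩ <;> aesop)]

lemma X4_apply (a b c a' b' c' : Fin d) :
    X4 d (a,b,c) (a',b',c') =
      (if a = c ∧ a' = b ∧ b' = b ∧ c' = b ∧ b ≠ a then (1:ℂ) else 0)
      + (if a = b ∧ a = c ∧ b' = a ∧ c' = a' ∧ a ≠ a' then 1 else 0)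
      + (if a = b ∧ a' = c ∧ b' = c ∧ c' = c ∧ c ≠ a then 1 else 0)
      + (if a = b ∧ a = c ∧ a' = b' ∧ c' = a ∧ a ≠ a' then 1 else 0) := by
  unfold X4 E3
  simp only [Matrix.sum_apply, mite_apply, Matrix.zero_apply, Matrix.add_apply,
    Matrix.single, Matrix.of_apply, Prod.mk.injEq]
  simp only [ite_add_zero', Finset.sum_add_distrib, ite_ite_and]
  rw [sum2 _ b a (a = c ∧ a' = b ∧ b' = b ∧ c' = b ∧ b ≠ a)
        (fun i k => by constructor <;> rintro ⟨h1, h2⟩ <;> aesop),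
      sum2 _ a a' (a = b ∧ a = c ∧ b' = a ∧ c' = a' ∧ a ≠ a')
        (fun i k => by constructor <;> rintro ⟨h1, h2⟩ <;> aesop),
      sum2 _ c a (a = b ∧ a' = c ∧ b' = c ∧ c' = c ∧ c ≠ a)
        (fun i k => by constructor <;> rintro ⟨h1, h2⟩ <;> aesop),
      sum2 _ a a' (a = b ∧ a = c ∧ a' = b' ∧ c' = a ∧ a ≠ a')
        (fun i k => by constructor <;> rintro ⟨h1, h2⟩ <;> aesop)]

lemma X5_apply (a b c a' b' c' : Fin d) :
    X5 d (a,b,c) (a',b',c') =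
      (if a = b ∧ a' = a ∧ b' = c ∧ c' = a ∧ a ≠ c then (1:ℂ) else 0)
      + (if a = c ∧ a' = a ∧ b' = a ∧ c' = b ∧ a ≠ b then 1 else 0) := by
  unfold X5 E3
  simp only [Matrix.sum_apply, mite_apply, Matrix.zero_apply, Matrix.add_apply,
    Matrix.single, Matrix.of_apply, Prod.mk.injEq]
  simp only [ite_add_zero', Finset.sum_add_distrib, ite_ite_and]
  rw [sum2 _ a c (a = b ∧ a' = a ∧ b' = c ∧ c' = a ∧ a ≠ c)
        (fun i k => by constructor <;> rintro ⟨h1, h2⟩ <;> aesop),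
      sum2 _ a b (a = c ∧ a' = a ∧ b' = a ∧ c' = b ∧ a ≠ b)
        (fun i k => by constructor <;> rintro ⟨h1, h2⟩ <;> aesop)]

lemma X7_apply (a b c a' b' c' : Fin d) :
    X7 d (a,b,c) (a',b',c') =
      (if a = b ∧ b' = c ∧ a' = c' ∧ a' ≠ a ∧ a ≠ c ∧ a' ≠ c then (1:ℂ) else 0)
      + (if a = c ∧ a' = b' ∧ c' = b ∧ a' ≠ b ∧ b ≠ a ∧ a' ≠ a then 1 else 0) := by
  unfold X7 E3
  simp only [Matrix.sum_apply, mite_apply, Matrix.zero_apply, Matrix.add_apply,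
    Matrix.single, Matrix.of_apply, Prod.mk.injEq]
  simp only [ite_add_zero', Finset.sum_add_distrib, ite_ite_and]
  rw [sum3 _ a' a c (a = b ∧ b' = c ∧ a' = c' ∧ a' ≠ a ∧ a ≠ c ∧ a' ≠ c)
        (fun i k l => by constructor <;> rintro ⟨h1, h2⟩ <;> aesop),
      sum3 _ a' b a (a = c ∧ a' = b' ∧ c' = b ∧ a' ≠ b ∧ b ≠ a ∧ a' ≠ a)
        (fun i k l => by constructor <;> rintro ⟨h1, h2⟩ <;> aesop)]

lemma X8_apply (a b c a' b' c' : Fin d) :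
    X8 d (a,b,c) (a',b',c') =
      (if a = b ∧ a' = b' ∧ c' = c ∧ a' ≠ a ∧ a ≠ c ∧ a' ≠ c then (1:ℂ) else 0)
      + (if a = c ∧ a' = c' ∧ b' = b ∧ a' ≠ b ∧ b ≠ a ∧ a' ≠ a then 1 else 0) := by
  unfold X8 E3
  simp only [Matrix.sum_apply, mite_apply, Matrix.zero_apply, Matrix.add_apply,
    Matrix.single, Matrix.of_apply, Prod.mk.injEq]
  simp only [ite_add_zero', Finset.sum_add_distrib, ite_ite_and]
  rw [sum3 _ a' a c (a = b ∧ a' = b' ∧ c' = c ∧ a' ≠ a ∧ a ≠ c ∧ a' ≠ c)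
        (fun i k l => by constructor <;> rintro ⟨h1, h2⟩ <;> aesop),
      sum3 _ a' b a (a = c ∧ a' = c' ∧ b' = b ∧ a' ≠ b ∧ b ≠ a ∧ a' ≠ a)
        (fun i k l => by constructor <;> rintro ⟨h1, h2⟩ <;> aesop)]

/-- The isometry-like matrix whose columns are the vectors `w_m`. -/
def Bmat (d : ℕ) : Matrix (Fin d) (Fin d × Fin d × Fin d) ℂ :=
  Matrix.of fun m p =>
    if (p.2.1 = m ∧ p.2.2 = p.1) ∨ (p.1 = p.2.1 ∧ p.2.2 = m) then 1 else 0

set_option maxRecDepth 10000 in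
set_option maxHeartbeats 1000000 in
/-- Key factorization. -/
lemma key (d : ℕ) :
    X1 d + X2 d + X4 d + X5 d + X7 d + X8 d = (Bmat d)ᴴ * (Bmat d) := by
  ext ⟨a, b, c⟩ ⟨a', b', c'⟩
  rw [Matrix.mul_apply]
  simp only [Matrix.add_apply, X1_apply, X2_apply, X4_apply, X5_apply, X7_apply, X8_apply,
    Matrix.conjTranspose_apply, Bmat, Matrix.of_apply]
  simp only [apply_ite (star : ℂ → ℂ), star_one, star_zero, ite_mul, zero_mul, one_mul,
    ite_ite_and]
  rcases eq_or_ne a b with rfl | hab <;> rcases eq_or_ne c a with rfl | hca <;>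
    rcases eq_or_ne a' b' with rfl | hab' <;> rcases eq_or_ne c' a' with rfl | hca' <;>
    simp_all [ite_and, Finset.sum_ite_eq, Finset.sum_ite_eq'] <;>
    first
      | (split_ifs <;> grind)
      | aesop

set_option maxRecDepth 10000 in
lemma Msum_entry (i j k l : Fin d) :
    (X1 d + X2 d + X4 d + X5 d + X7 d + X8 d) (i,j,k) (l,j,k)
      = if (j = i ∨ k = i) ∧ l = i then (1:ℂ) else 0 := by
  simp only [Matrix.add_apply, X1_apply, X2_apply, X4_apply, X5_apply, X7_apply, X8_apply]
  by_cases h1 : j = i <;> by_cases h2 : k = i <;> by_cases h3 : l = i <;>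
    simp_all <;> first | (split_ifs <;> grind) | aesop

lemma sum_count (i : Fin d) :
    (∑ j : Fin d, ∑ k : Fin d, if j = i ∨ k = i then (1:ℂ) else 0) = 2*(d:ℂ) - 1 := by
  have inner : ∀ j : Fin d, (∑ k : Fin d, if j = i ∨ k = i then (1:ℂ) else 0)
      = if j = i then (d:ℂ) else 1 := by
    intro j
    by_cases hj : j = i
    · simp [hj, Finset.card_univ]
    · simp [hj]
  have outer : ∀ j : Fin d, (if j = i then (d:ℂ) else 1)
      = 1 + (if j = i then (d:ℂ) - 1 else 0) := by
    intro j; split <;> ring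
  simp only [inner, outer, Finset.sum_add_distrib, Finset.sum_const, Finset.card_univ,
    Fintype.card_fin, nsmul_eq_mul, mul_one, Finset.sum_ite_eq', Finset.mem_univ, if_true]
  ring

end CloningAux

end Aux

/-- `X = k_d(X_1+X_2+X_4+X_5+X_7+X_8)` with `k_d = 1/(2d-1)` is positive
semidefinite and has partial trace over factors 2,3 equal to the identity. -/
theorem primal_feasible_cloning (d : ℕ) (hd : 2 ≤ d) :
    ((2 * (d : ℂ) - 1)⁻¹ • (X1 d + X2 d + X4 d + X5 d + X7 d + X8 d)).PosSemidef ∧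
    ptrace23 d ((2 * (d : ℂ) - 1)⁻¹ • (X1 d + X2 d + X4 d + X5 d + X7 d + X8 d)) = 1 := by
  have hd' : (2:ℝ) ≤ (d:ℝ) := by exact_mod_cast hd
  have hr : (0:ℝ) < 2*(d:ℝ) - 1 := by nlinarith
  have hcast : (2 * (d:ℂ) - 1) = ((2*(d:ℝ) - 1 : ℝ) : ℂ) := by push_cast; ring
  have hne : (2 * (d:ℂ) - 1) ≠ 0 := by
    rw [hcast]; exact_mod_cast Complex.ofReal_ne_zero.mpr (ne_of_gt hr)
  constructor
  · rw [CloningAux.key d]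
    set s : ℝ := Real.sqrt (2*(d:ℝ) - 1)⁻¹ with hs_def
    have hss : (s:ℂ) * s = ((2*(d:ℝ) - 1)⁻¹ : ℝ) := by
      rw [← Complex.ofReal_mul, Real.mul_self_sqrt (inv_nonneg.2 hr.le)]
    have hfact : (2 * (d:ℂ) - 1)⁻¹ • ((CloningAux.Bmat d)ᴴ * CloningAux.Bmat d)
        = ((s:ℂ) • CloningAux.Bmat d)ᴴ * ((s:ℂ) • CloningAux.Bmat d) := by
      rw [Matrix.conjTranspose_smul, Matrix.smul_mul, Matrix.mul_smul, smul_smul]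
      congr 1
      rw [Complex.star_def, Complex.conj_ofReal, hss, hcast, ← Complex.ofReal_inv]
    rw [hfact]
    exact Matrix.posSemidef_conjTranspose_mul_self _
  · ext i l
    show (∑ j : Fin d, ∑ k : Fin d,
      ((2 * (d : ℂ) - 1)⁻¹ • (X1 d + X2 d + X4 d + X5 d + X7 d + X8 d)) (i,j,k) (l,j,k))
        = (1 : Matrix (Fin d) (Fin d) ℂ) i l
    simp only [Matrix.smul_apply, smul_eq_mul, CloningAux.Msum_entry, ← Finset.mul_sum]
    by_cases hl : l = i
    · subst hl
      simp only [and_true]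
      rw [CloningAux.sum_count, inv_mul_cancel₀ hne, Matrix.one_apply_eq]
    · simp only [hl, and_false, if_false, Finset.sum_const_zero, mul_zero]
      exact (Matrix.one_apply_ne (fun h => hl h.symm)).symm
end

section
/- With X_1,…,X_9 as in the phase-covariant cloning setup and X = Σ_i x_i X_i, one has Tr[(φ_d^+)^{⊗3} X] = (1/d²)x_1 + ((d-1)/d²)(2x_2 + x_3 + 4x_4 + 2x_5) + ((d-1)(d-2)/d²)(x_6 + 2x_7 + 2x_8 + x_9), where φ_d^+ = |φ_d^+⟩⟨φ_d^+| and |φ_d^+⟩ = (1/√d)Σ_k |k⟩. -/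
open scoped BigOperators ComplexOrder
open Matrix

noncomputable section Aux

/-- Sum of all entries of a matrix on the triple-index space. -/
def S3 (d : ℕ)
    (M : Matrix (Fin d × Fin d × Fin d) (Fin d × Fin d × Fin d) ℂ) : ℂ :=
  ∑ r : (Fin d × Fin d × Fin d) × (Fin d × Fin d × Fin d), M r.1 r.2

lemma S3_sum (d : ℕ) {ι : Type*} (s : Finset ι)
    (f : ι → Matrix (Fin d × Fin d × Fin d) (Fin d × Fin d × Fin d) ℂ) :
    S3 d (∑ i ∈ s, f i) = ∑ i ∈ s, S3 d (f i) := by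
  simp only [S3, Matrix.sum_apply]
  rw [Finset.sum_comm]

lemma S3_add (d : ℕ) (A B) : S3 d (A + B) = S3 d A + S3 d B := by
  simp [S3, Finset.sum_add_distrib]

lemma S3_zero (d : ℕ) : S3 d 0 = 0 := by simp [S3]

lemma S3_smul (d : ℕ) (c : ℂ) (A) : S3 d (c • A) = c * S3 d A := by
  simp [S3, Finset.mul_sum]

lemma S3_ite (d : ℕ) (P : Prop) [Decidable P] (A B) :
    S3 d (if P then A else B) = if P then S3 d A else S3 d B := by
  split <;> rfl

lemma S3_E3 (d : ℕ) (p q : Fin d × Fin d × Fin d) : S3 d (E3 d p q) = 1 := by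
  simp [S3, E3, Matrix.single, Fintype.sum_prod_type, ite_and]

lemma S3_eq (d : ℕ)
    (M : Matrix (Fin d × Fin d × Fin d) (Fin d × Fin d × Fin d) ℂ) :
    S3 d M = ∑ p, ∑ q, M p q := by
  show (∑ r : (Fin d × Fin d × Fin d) × (Fin d × Fin d × Fin d), M r.1 r.2) = _
  exact Fintype.sum_prod_type (f := fun r => M r.1 r.2)

lemma trace_phi3_mul (d : ℕ)
    (M : Matrix (Fin d × Fin d × Fin d) (Fin d × Fin d × Fin d) ℂ) :
    (Phi3 d * M).trace = (1 / (d : ℂ)^3) * S3 d M := by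
  rw [S3_eq]
  simp only [Matrix.trace, Matrix.diag, Matrix.mul_apply, Phi3, Matrix.of_apply,
    Finset.mul_sum]
  rw [Finset.sum_comm]

lemma sum_pair (d : ℕ) (c : ℂ) :
    (∑ i : Fin d, ∑ k : Fin d, if i ≠ k then c else 0) = (d : ℂ) * ((d : ℂ) - 1) * c := by
  have h : ∀ i k : Fin d, (if i ≠ k then c else 0) = c - (if i = k then c else 0) := by
    intro i k; by_cases h : i = k <;> simp [h]
  simp_rw [h, Finset.sum_sub_distrib, Finset.sum_ite_eq, Finset.mem_univ, if_true,
    Finset.sum_const, Finset.card_univ, Fintype.card_fin, nsmul_eq_mul]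
  ring

lemma sum_triple (d : ℕ) (c : ℂ) :
    (∑ i : Fin d, ∑ k : Fin d, ∑ l : Fin d, if i ≠ k ∧ k ≠ l ∧ i ≠ l then c else 0)
      = (d : ℂ) * ((d : ℂ) - 1) * (((d : ℂ) - 2) * c) := by
  have h : ∀ i k : Fin d, (∑ l : Fin d, if i ≠ k ∧ k ≠ l ∧ i ≠ l then c else 0)
      = if i ≠ k then ((d : ℂ) - 2) * c else 0 := by
    intro i k
    by_cases hik : i = k
    · simp [hik]
    · have h2 : ∀ l : Fin d, (if i ≠ k ∧ k ≠ l ∧ i ≠ l then c else 0)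
          = c - (if k = l then c else 0) - (if i = l then c else 0) := by
        intro l
        by_cases h1 : k = l <;> by_cases h3 : i = l <;> simp_all
      simp_rw [h2, Finset.sum_sub_distrib, Finset.sum_ite_eq, Finset.mem_univ, if_true,
        Finset.sum_const, Finset.card_univ, Fintype.card_fin, nsmul_eq_mul]
      simp [hik]; ring
  simp_rw [h]
  rw [sum_pair]

lemma S3_X1 (d : ℕ) : S3 d (X1 d) = (d : ℂ) := by
  simp [X1, S3_sum, S3_E3]

lemma S3_X2 (d : ℕ) : S3 d (X2 d) = 2 * ((d : ℂ) * ((d : ℂ) - 1)) := by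
  simp only [X2, S3_sum, S3_ite, S3_add, S3_E3, S3_zero]
  have := sum_pair d (2 : ℂ)
  rw [show ((1 : ℂ) + 1) = 2 by norm_num, this]; ring

lemma S3_X3 (d : ℕ) : S3 d (X3 d) = (d : ℂ) * ((d : ℂ) - 1) := by
  simp only [X3, S3_sum, S3_ite, S3_E3, S3_zero]
  rw [sum_pair]; ring

lemma S3_X4 (d : ℕ) : S3 d (X4 d) = 4 * ((d : ℂ) * ((d : ℂ) - 1)) := by
  simp only [X4, S3_sum, S3_ite, S3_add, S3_E3, S3_zero]
  rw [show ((1 : ℂ) + 1 + 1 + 1) = 4 by norm_num, sum_pair]; ring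

lemma S3_X5 (d : ℕ) : S3 d (X5 d) = 2 * ((d : ℂ) * ((d : ℂ) - 1)) := by
  simp only [X5, S3_sum, S3_ite, S3_add, S3_E3, S3_zero]
  rw [show ((1 : ℂ) + 1) = 2 by norm_num, sum_pair]; ring

lemma S3_X6 (d : ℕ) : S3 d (X6 d) = (d : ℂ) * ((d : ℂ) - 1) * ((d : ℂ) - 2) := by
  simp only [X6, S3_sum, S3_ite, S3_E3, S3_zero]
  rw [sum_triple]; ring

lemma S3_X7 (d : ℕ) : S3 d (X7 d) = 2 * ((d : ℂ) * ((d : ℂ) - 1) * ((d : ℂ) - 2)) := by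
  simp only [X7, S3_sum, S3_ite, S3_add, S3_E3, S3_zero]
  rw [show ((1 : ℂ) + 1) = 2 by norm_num, sum_triple]; ring

lemma S3_X8 (d : ℕ) : S3 d (X8 d) = 2 * ((d : ℂ) * ((d : ℂ) - 1) * ((d : ℂ) - 2)) := by
  simp only [X8, S3_sum, S3_ite, S3_add, S3_E3, S3_zero]
  rw [show ((1 : ℂ) + 1) = 2 by norm_num, sum_triple]; ring

lemma S3_X9 (d : ℕ) : S3 d (X9 d) = (d : ℂ) * ((d : ℂ) - 1) * ((d : ℂ) - 2) := by
  simp only [X9, S3_sum, S3_ite, S3_E3, S3_zero]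
  rw [sum_triple]; ring

end Aux

/-- the objective value `Tr[(φ_d^+)^{⊗3} X]` for `X = Σ_i x_i X_i`. -/
theorem objective_formula (d : ℕ) (hd : 2 ≤ d) (x : Fin 9 → ℂ) :
    (Phi3 d * (x 0 • X1 d + x 1 • X2 d + x 2 • X3 d + x 3 • X4 d + x 4 • X5 d
      + x 5 • X6 d + x 6 • X7 d + x 7 • X8 d + x 8 • X9 d)).trace
    = (1 / (d:ℂ)^2) * x 0
      + (((d:ℂ) - 1) / (d:ℂ)^2) * (2 * x 1 + x 2 + 4 * x 3 + 2 * x 4)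
      + (((d:ℂ) - 1) * ((d:ℂ) - 2) / (d:ℂ)^2) * (x 5 + 2 * x 6 + 2 * x 7 + x 8) := by
  have hd0 : (d : ℂ) ≠ 0 := by
    have : (0 : ℕ) < d := by omega
    exact_mod_cast Nat.cast_ne_zero.mpr (by omega)
  rw [trace_phi3_mul]
  simp only [S3_add, S3_smul, S3_X1, S3_X2, S3_X3, S3_X4, S3_X5, S3_X6, S3_X7, S3_X8, S3_X9]
  field_simp
  ring
end

section
/- The primal feasible point x = k_d(1,1,0,1,1,0,1,1,0) with k_d = 1/(2d-1) achieves objective value Tr[(φ_d^+)^{⊗3} X] = (2d-1)/d² for the phase-covariant cloning SDP. -/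
open scoped BigOperators ComplexOrder
open Matrix

lemma ite_mat_apply {n : Type*} (c : Prop) [Decidable c]
    (M N : Matrix n n ℂ) (a b : n) :
    (if c then M else N) a b = if c then M a b else N a b := by
  split <;> rfl

lemma sum_swap1 {α ι : Type*} [Fintype α] [Fintype ι] (f : α → α → ι → ℂ) :
    ∑ a : α, ∑ b : α, ∑ i : ι, f a b i = ∑ i : ι, ∑ a : α, ∑ b : α, f a b i := by
  have h1 : ∀ a, ∑ b : α, ∑ i : ι, f a b i = ∑ i : ι, ∑ b : α, f a b i :=
    fun a => Finset.sum_comm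
  simp_rw [h1]; exact Finset.sum_comm

lemma sum_swap2 {α ι : Type*} [Fintype α] [Fintype ι] (f : α → α → ι → ι → ℂ) :
    ∑ a : α, ∑ b : α, ∑ i : ι, ∑ k : ι, f a b i k
      = ∑ i : ι, ∑ k : ι, ∑ a : α, ∑ b : α, f a b i k := by
  rw [sum_swap1 (f := fun a b i => ∑ k, f a b i k)]
  exact Finset.sum_congr rfl fun i _ => sum_swap1 (f := fun a b k => f a b i k)

lemma sum_swap3 {α ι : Type*} [Fintype α] [Fintype ι] (f : α → α → ι → ι → ι → ℂ) :
    ∑ a : α, ∑ b : α, ∑ i : ι, ∑ k : ι, ∑ l : ι, f a b i k l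
      = ∑ i : ι, ∑ k : ι, ∑ l : ι, ∑ a : α, ∑ b : α, f a b i k l := by
  rw [sum_swap1 (f := fun a b i => ∑ k, ∑ l, f a b i k l)]
  exact Finset.sum_congr rfl fun i _ => sum_swap2 (f := fun a b k l => f a b i k l)

lemma sumE3 (d : ℕ) (p q : Fin d × Fin d × Fin d) :
    ∑ a : Fin d × Fin d × Fin d, ∑ b : Fin d × Fin d × Fin d, E3 d p q a b = 1 := by
  simp [E3, Matrix.single, ite_and, Finset.sum_ite_eq]

lemma count2 (d : ℕ) (c : ℂ) :
    ∑ i : Fin d, ∑ k : Fin d, (if i ≠ k then c else 0)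
      = (d : ℂ) * ((d : ℂ) - 1) * c := by
  have h : ∀ i k : Fin d, (if i ≠ k then c else 0) = c - (if i = k then c else 0) := by
    intro i k; by_cases h : i = k <;> simp [h]
  simp_rw [h, Finset.sum_sub_distrib, Finset.sum_const, Finset.sum_ite_eq,
    Finset.mem_univ, if_true, Finset.card_univ, Fintype.card_fin, nsmul_eq_mul]
  simp [Finset.sum_const, Finset.card_univ]
  ring

lemma count3 (d : ℕ) (c : ℂ) :
    ∑ i : Fin d, ∑ k : Fin d, ∑ l : Fin d,
      (if i ≠ k ∧ k ≠ l ∧ i ≠ l then c else 0)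
      = (d : ℂ) * ((d : ℂ) - 1) * ((d : ℂ) - 2) * c := by
  have h : ∀ i k l : Fin d, (if i ≠ k ∧ k ≠ l ∧ i ≠ l then c else 0)
      = if i ≠ k then (c - (if k = l then c else 0) - (if i = l then c else 0)) else 0 := by
    intro i k l
    by_cases h1 : i = k <;> by_cases h2 : k = l <;> by_cases h3 : i = l <;>
      simp_all
  simp_rw [h]
  have h2 : ∀ i k : Fin d, (∑ l : Fin d,
      if i ≠ k then (c - (if k = l then c else 0) - (if i = l then c else 0)) else 0)
      = if i ≠ k then ((d : ℂ) * c - c - c) else 0 := by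
    intro i k
    by_cases h1 : i ≠ k <;>
      simp [h1, Finset.sum_sub_distrib, Finset.sum_ite_eq, Finset.card_univ, mul_comm]
  simp_rw [h2, count2]
  ring

lemma sum_ite_const {α : Type*} [Fintype α] (c : Prop) [Decidable c] (f : α → α → ℂ) :
    (∑ a : α, ∑ b : α, if c then f a b else 0) = if c then ∑ a : α, ∑ b : α, f a b else 0 := by
  split <;> simp

lemma sumX1 (d : ℕ) :
    ∑ a : Fin d × Fin d × Fin d, ∑ b : Fin d × Fin d × Fin d, X1 d a b = (d : ℂ) := by
  simp only [X1, Matrix.sum_apply]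
  rw [sum_swap1]
  simp [sumE3]

lemma sumX2 (d : ℕ) :
    ∑ a : Fin d × Fin d × Fin d, ∑ b : Fin d × Fin d × Fin d, X2 d a b
      = (d : ℂ) * ((d : ℂ) - 1) * 2 := by
  simp only [X2, Matrix.sum_apply, ite_mat_apply, Matrix.add_apply, Matrix.zero_apply]
  rw [sum_swap2]
  simp_rw [sum_ite_const, Finset.sum_add_distrib, sumE3]
  rw [count2]; norm_num

lemma sumX4 (d : ℕ) :
    ∑ a : Fin d × Fin d × Fin d, ∑ b : Fin d × Fin d × Fin d, X4 d a b
      = (d : ℂ) * ((d : ℂ) - 1) * 4 := by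
  simp only [X4, Matrix.sum_apply, ite_mat_apply, Matrix.add_apply, Matrix.zero_apply]
  rw [sum_swap2]
  simp_rw [sum_ite_const, Finset.sum_add_distrib, sumE3]
  rw [show ((1:ℂ)+1+1+1) = 4 by norm_num, count2]

lemma sumX5 (d : ℕ) :
    ∑ a : Fin d × Fin d × Fin d, ∑ b : Fin d × Fin d × Fin d, X5 d a b
      = (d : ℂ) * ((d : ℂ) - 1) * 2 := by
  simp only [X5, Matrix.sum_apply, ite_mat_apply, Matrix.add_apply, Matrix.zero_apply]
  rw [sum_swap2]
  simp_rw [sum_ite_const, Finset.sum_add_distrib, sumE3]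
  rw [count2]; norm_num

lemma sumX7 (d : ℕ) :
    ∑ a : Fin d × Fin d × Fin d, ∑ b : Fin d × Fin d × Fin d, X7 d a b
      = (d : ℂ) * ((d : ℂ) - 1) * ((d : ℂ) - 2) * 2 := by
  simp only [X7, Matrix.sum_apply, ite_mat_apply, Matrix.add_apply, Matrix.zero_apply]
  rw [sum_swap3]
  simp_rw [sum_ite_const, Finset.sum_add_distrib, sumE3]
  rw [count3]; norm_num

lemma sumX8 (d : ℕ) :
    ∑ a : Fin d × Fin d × Fin d, ∑ b : Fin d × Fin d × Fin d, X8 d a b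
      = (d : ℂ) * ((d : ℂ) - 1) * ((d : ℂ) - 2) * 2 := by
  simp only [X8, Matrix.sum_apply, ite_mat_apply, Matrix.add_apply, Matrix.zero_apply]
  rw [sum_swap3]
  simp_rw [sum_ite_const, Finset.sum_add_distrib, sumE3]
  rw [count3]; norm_num

/-- the primal feasible point `x = k_d(1,1,0,1,1,0,1,1,0)`, `k_d = 1/(2d-1)`,
achieves objective value `(2d-1)/d²`. -/
theorem primal_objective_value (d : ℕ) (hd : 2 ≤ d) :
    (Phi3 d * ((2 * (d : ℂ) - 1)⁻¹ •
        (X1 d + X2 d + X4 d + X5 d + X7 d + X8 d))).trace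
      = (2 * (d : ℂ) - 1) / (d : ℂ)^2 := by
  have hd0 : (d : ℂ) ≠ 0 := by
    exact_mod_cast Nat.cast_ne_zero.mpr (by omega)
  have hd1 : 2 * (d : ℂ) - 1 ≠ 0 := by
    intro h
    have h2 : (2 * d : ℕ) = (1 : ℕ) := by
      have : ((2 * d : ℕ) : ℂ) = ((1 : ℕ) : ℂ) := by push_cast; linear_combination h
      exact_mod_cast this
    omega
  have key : ∀ M : Matrix (Fin d × Fin d × Fin d) (Fin d × Fin d × Fin d) ℂ,
      (Phi3 d * M).trace = ((d : ℂ)^3)⁻¹ * ∑ a, ∑ b, M a b := by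
    intro M
    rw [Matrix.trace]
    simp only [Matrix.diag_apply, Matrix.mul_apply, Phi3, Matrix.of_apply, one_div]
    simp_rw [← Finset.mul_sum]
    rw [Finset.sum_comm]
  rw [key]
  simp only [Matrix.smul_apply, Matrix.add_apply, smul_eq_mul]
  simp_rw [← Finset.mul_sum, Finset.sum_add_distrib]
  rw [sumX1, sumX2, sumX4, sumX5, sumX7, sumX8]
  field_simp
  rw [div_eq_iff (by rwa [mul_comm])]
  ring
end

section
/- Define Ẑ = Σ_i b_i X_i with b_1 = b_2 = b_3 = b_6 = 2(d-1)/d³ and b_4 = b_5 = b_7 = b_8 = b_9 = -1/d³. Then Ẑ is positive semidefinite for all d ≥ 2. -/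
open scoped BigOperators ComplexOrder
open Matrix

namespace DualAux
open Finset Complex

variable {m : Type*} [Fintype m] [DecidableEq m]

omit [DecidableEq m] in
lemma quad_add (A B : Matrix m m ℂ) (x : m → ℂ) :
    star x ⬝ᵥ ((A + B) *ᵥ x) = star x ⬝ᵥ (A *ᵥ x) + star x ⬝ᵥ (B *ᵥ x) := by
  rw [Matrix.add_mulVec, dotProduct_add]

omit [DecidableEq m] in
lemma quad_sum {ι : Type*} [DecidableEq ι] (s : Finset ι) (f : ι → Matrix m m ℂ) (x : m → ℂ) :
    star x ⬝ᵥ ((∑ i ∈ s, f i) *ᵥ x) = ∑ i ∈ s, star x ⬝ᵥ (f i *ᵥ x) := by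
  induction s using Finset.induction_on with
  | empty => simp
  | insert _ _ h ih => rw [Finset.sum_insert h, quad_add, ih, Finset.sum_insert h]

omit [DecidableEq m] in
lemma quad_ite (c : Prop) [Decidable c] (A : Matrix m m ℂ) (x : m → ℂ) :
    star x ⬝ᵥ ((if c then A else 0) *ᵥ x) = if c then star x ⬝ᵥ (A *ᵥ x) else 0 := by
  split_ifs <;> simp

lemma quadE3 (d : ℕ) (p q : Fin d × Fin d × Fin d) (x : Fin d × Fin d × Fin d → ℂ) :
    star x ⬝ᵥ (E3 d p q *ᵥ x) = (starRingEnd ℂ) (x p) * x q := by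
  simp [E3, Matrix.mulVec, dotProduct, Matrix.single, ite_and,
    Finset.mul_sum]







lemma sum_ite_ne (i : Fin d) (f : Fin d → ℂ) :
    (∑ k, if i ≠ k then f k else 0) = ∑ k ∈ Finset.univ.erase i, f k := by
  rw [← Finset.sum_filter, Finset.filter_ne]

lemma reorg2 (g : Fin d → Fin d → ℂ) :
    (∑ i, ∑ k, if i ≠ k then g i k else 0)
      = ∑ t, ∑ a ∈ Finset.univ.erase t, g a t := by
  rw [Finset.sum_comm]
  refine Finset.sum_congr rfl fun t _ => ?_
  rw [← Finset.sum_filter]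
  congr 1
  ext a
  simp [ne_comm]

lemma sum3 (g : Fin d → Fin d → Fin d → ℂ) :
    (∑ i, ∑ k, ∑ l, if i ≠ k ∧ k ≠ l ∧ i ≠ l then g i k l else 0)
      = ∑ t, ∑ a ∈ Finset.univ.erase t,
          ∑ b ∈ (Finset.univ.erase t).erase a, g b a t := by
  have step : (∑ i, ∑ k, ∑ l, if i ≠ k ∧ k ≠ l ∧ i ≠ l then g i k l else 0)
      = ∑ l, ∑ k, ∑ i, if i ≠ k ∧ k ≠ l ∧ i ≠ l then g i k l else 0 :=
    calc (∑ i, ∑ k, ∑ l, if i ≠ k ∧ k ≠ l ∧ i ≠ l then g i k l else 0)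
        = ∑ i, ∑ l, ∑ k, if i ≠ k ∧ k ≠ l ∧ i ≠ l then g i k l else 0 :=
          Finset.sum_congr rfl fun i _ => Finset.sum_comm
      _ = ∑ l, ∑ i, ∑ k, if i ≠ k ∧ k ≠ l ∧ i ≠ l then g i k l else 0 := Finset.sum_comm
      _ = ∑ l, ∑ k, ∑ i, if i ≠ k ∧ k ≠ l ∧ i ≠ l then g i k l else 0 :=
          Finset.sum_congr rfl fun l _ => Finset.sum_comm
  rw [step]
  refine Finset.sum_congr rfl fun t _ => ?_
  rw [show (∑ k, ∑ i, if i ≠ k ∧ k ≠ t ∧ i ≠ t then g i k t else 0)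
      = ∑ k, if k ≠ t then (∑ i, if i ≠ k ∧ i ≠ t then g i k t else 0) else 0 by
    refine Finset.sum_congr rfl fun k _ => ?_
    by_cases hk : k ≠ t
    · rw [if_pos hk]
      refine Finset.sum_congr rfl fun i _ => ?_
      by_cases h1 : i ≠ k <;> by_cases h2 : i ≠ t <;> simp_all
    · push_neg at hk
      subst hk
      simp]
  rw [← Finset.sum_filter, Finset.filter_ne']
  refine Finset.sum_congr rfl fun a ha => ?_
  rw [← Finset.sum_filter]
  congr 1
  ext b
  simp only [Finset.mem_filter, Finset.mem_univ, true_and, Finset.mem_erase]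
  tauto

lemma sum3m (g : Fin d → Fin d → Fin d → ℂ) :
    (∑ i, ∑ k, ∑ l, if i ≠ k ∧ k ≠ l ∧ i ≠ l then g i k l else 0)
      = ∑ t, ∑ a ∈ Finset.univ.erase t,
          ∑ b ∈ (Finset.univ.erase t).erase a, g b t a := by
  rw [← sum3 (fun i k l => g i l k)]
  refine Finset.sum_congr rfl fun i _ => ?_
  rw [Finset.sum_comm]
  refine Finset.sum_congr rfl fun k _ => Finset.sum_congr rfl fun l _ => ?_
  by_cases h1 : i ≠ k <;> by_cases h2 : k ≠ l <;> by_cases h3 : i ≠ l <;>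
    simp [h1, h2, h3, ne_comm] <;> tauto


noncomputable def Sx (x : Fin d × Fin d × Fin d → ℂ) (t : Fin d) : ℂ :=
  ∑ a ∈ Finset.univ.erase t, (x (a,a,t) + x (a,t,a))

noncomputable def Ac (x : Fin d × Fin d × Fin d → ℂ) (t : Fin d) : ℂ :=
  ∑ a ∈ Finset.univ.erase t,
    ((starRingEnd ℂ) (x (a,a,t)) * x (a,a,t) + (starRingEnd ℂ) (x (a,t,a)) * x (a,t,a))

variable (x : Fin d × Fin d × Fin d → ℂ)

lemma q1 : star x ⬝ᵥ (X1 d *ᵥ x) = ∑ t, (starRingEnd ℂ) (x (t,t,t)) * x (t,t,t) := by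
  simp only [X1, quad_sum, quadE3]

lemma q2 : star x ⬝ᵥ (X2 d *ᵥ x) = ∑ t, Ac x t := by
  simp only [X2, quad_sum, quad_ite, quad_add, quadE3]
  rw [reorg2 (fun i k => (starRingEnd ℂ) (x (i,i,k)) * x (i,i,k)
    + (starRingEnd ℂ) (x (i,k,i)) * x (i,k,i))]
  rfl

lemma q3 : star x ⬝ᵥ (X3 d *ᵥ x)
    = ∑ i, ∑ k, if i ≠ k then (starRingEnd ℂ) (x (k,i,i)) * x (k,i,i) else 0 := by
  simp only [X3, quad_sum, quad_ite, quadE3]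

lemma q4 : star x ⬝ᵥ (X4 d *ᵥ x)
    = ∑ t, ((starRingEnd ℂ) (Sx x t) * x (t,t,t)
        + (starRingEnd ℂ) (x (t,t,t)) * Sx x t) := by
  simp only [X4, quad_sum, quad_ite, quad_add, quadE3]
  refine Finset.sum_congr rfl fun t _ => ?_
  rw [sum_ite_ne t (fun k => (starRingEnd ℂ) (x (k,t,k)) * x (t,t,t)
    + (starRingEnd ℂ) (x (t,t,t)) * x (k,t,k)
    + (starRingEnd ℂ) (x (k,k,t)) * x (t,t,t)
    + (starRingEnd ℂ) (x (t,t,t)) * x (k,k,t))]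
  rw [Sx, map_sum, Finset.sum_mul, Finset.mul_sum, ← Finset.sum_add_distrib]
  refine Finset.sum_congr rfl fun a _ => ?_
  rw [map_add]
  ring

lemma q5 : star x ⬝ᵥ (X5 d *ᵥ x)
    = ∑ t, ∑ a ∈ Finset.univ.erase t,
        ((starRingEnd ℂ) (x (a,a,t)) * x (a,t,a)
          + (starRingEnd ℂ) (x (a,t,a)) * x (a,a,t)) := by
  simp only [X5, quad_sum, quad_ite, quad_add, quadE3]
  rw [reorg2 (fun i k => (starRingEnd ℂ) (x (i,i,k)) * x (i,k,i)
    + (starRingEnd ℂ) (x (i,k,i)) * x (i,i,k))]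

lemma q6 : star x ⬝ᵥ (X6 d *ᵥ x)
    = ∑ i, ∑ k, ∑ l, if i ≠ k ∧ k ≠ l ∧ i ≠ l
        then (starRingEnd ℂ) (x (i,k,l)) * x (i,k,l) else 0 := by
  simp only [X6, quad_sum, quad_ite, quadE3]

lemma ite_split (c : Prop) [Decidable c] (a b : ℂ) :
    (if c then a + b else 0) = (if c then a else 0) + (if c then b else 0) := by
  split_ifs <;> simp

lemma q7 : star x ⬝ᵥ (X7 d *ᵥ x)
    = (∑ t, ∑ a ∈ Finset.univ.erase t, ∑ b ∈ (Finset.univ.erase t).erase a,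
        (starRingEnd ℂ) (x (a,a,t)) * x (b,t,b))
      + ∑ t, ∑ a ∈ Finset.univ.erase t, ∑ b ∈ (Finset.univ.erase t).erase a,
        (starRingEnd ℂ) (x (a,t,a)) * x (b,b,t) := by
  simp only [X7, quad_sum, quad_ite, quad_add, quadE3, ite_split,
    Finset.sum_add_distrib]
  rw [sum3 (fun i k l => (starRingEnd ℂ) (x (k,k,l)) * x (i,l,i)),
    sum3m (fun i k l => (starRingEnd ℂ) (x (l,k,l)) * x (i,i,k))]

lemma q8 : star x ⬝ᵥ (X8 d *ᵥ x)
    = (∑ t, ∑ a ∈ Finset.univ.erase t, ∑ b ∈ (Finset.univ.erase t).erase a,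
        (starRingEnd ℂ) (x (a,a,t)) * x (b,b,t))
      + ∑ t, ∑ a ∈ Finset.univ.erase t, ∑ b ∈ (Finset.univ.erase t).erase a,
        (starRingEnd ℂ) (x (a,t,a)) * x (b,t,b) := by
  simp only [X8, quad_sum, quad_ite, quad_add, quadE3, ite_split,
    Finset.sum_add_distrib]
  rw [sum3 (fun i k l => (starRingEnd ℂ) (x (k,k,l)) * x (i,i,l)),
    sum3m (fun i k l => (starRingEnd ℂ) (x (l,k,l)) * x (i,k,i))]

lemma q9 : star x ⬝ᵥ (X9 d *ᵥ x)
    = ∑ i, ∑ k, ∑ l, if i ≠ k ∧ k ≠ l ∧ i ≠ l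
        then (starRingEnd ℂ) (x (i,k,l)) * x (i,l,k) else 0 := by
  simp only [X9, quad_sum, quad_ite, quadE3]


lemma perT (E : Finset (Fin d)) (u v : Fin d → ℂ) :
    (∑ a ∈ E, ((starRingEnd ℂ) (u a) * v a + (starRingEnd ℂ) (v a) * u a))
    + ((∑ a ∈ E, ∑ b ∈ E.erase a, (starRingEnd ℂ) (u a) * v b)
      + (∑ a ∈ E, ∑ b ∈ E.erase a, (starRingEnd ℂ) (v a) * u b))
    + ((∑ a ∈ E, ∑ b ∈ E.erase a, (starRingEnd ℂ) (u a) * u b)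
      + (∑ a ∈ E, ∑ b ∈ E.erase a, (starRingEnd ℂ) (v a) * v b))
    = (starRingEnd ℂ) (∑ a ∈ E, (u a + v a)) * (∑ a ∈ E, (u a + v a))
      - ∑ a ∈ E, ((starRingEnd ℂ) (u a) * u a + (starRingEnd ℂ) (v a) * v a) := by
  have h : ∀ f g : Fin d → ℂ,
      (∑ a ∈ E, ∑ b ∈ E.erase a, (starRingEnd ℂ) (f a) * g b)
        = (starRingEnd ℂ) (∑ a ∈ E, f a) * (∑ a ∈ E, g a)
          - ∑ a ∈ E, (starRingEnd ℂ) (f a) * g a := by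
    intro f g
    rw [map_sum, Finset.sum_mul, ← Finset.sum_sub_distrib]
    refine Finset.sum_congr rfl fun a ha => ?_
    rw [← Finset.mul_sum, Finset.sum_erase_eq_sub ha, mul_sub]
  rw [h u v, h v u, h u u, h v v]
  simp only [map_sum, map_add, Finset.sum_add_distrib]
  ring

lemma swap3 (f : Fin d → Fin d → Fin d → ℂ) :
    (∑ i, ∑ k, ∑ l, if i ≠ k ∧ k ≠ l ∧ i ≠ l then f i k l else 0)
    = ∑ i, ∑ k, ∑ l, if i ≠ k ∧ k ≠ l ∧ i ≠ l then f i l k else 0 := by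
  refine Finset.sum_congr rfl fun i _ => ?_
  rw [Finset.sum_comm]
  refine Finset.sum_congr rfl fun k _ => Finset.sum_congr rfl fun l _ => ?_
  exact if_congr (by tauto) rfl rfl

lemma conj_mul_self (z : ℂ) : (starRingEnd ℂ) z * z = (Complex.normSq z : ℂ) := by
  rw [mul_comm, Complex.mul_conj]

lemma AcReal (x : Fin d × Fin d × Fin d → ℂ) (t : Fin d) :
    Ac x t = ((∑ a ∈ Finset.univ.erase t,
      (Complex.normSq (x (a,a,t)) + Complex.normSq (x (a,t,a))) : ℝ) : ℂ) := by
  rw [Ac, Complex.ofReal_sum]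
  exact Finset.sum_congr rfl fun a _ => by rw [conj_mul_self, conj_mul_self]; push_cast; ring


lemma conj_swap (a b : ℂ) : (starRingEnd ℂ) b * a = (starRingEnd ℂ) ((starRingEnd ℂ) a * b) := by
  rw [_root_.map_mul, Complex.conj_conj, mul_comm]

lemma pair_real (a b : ℂ) :
    (starRingEnd ℂ) a * b + (starRingEnd ℂ) b * a
      = ((2 * ((starRingEnd ℂ) a * b).re : ℝ) : ℂ) := by
  rw [conj_swap a b, Complex.add_conj]

lemma Dconv (e : ℝ) (x : Fin d × Fin d × Fin d → ℂ) :
    (∑ i, ∑ k, ∑ l, if i ≠ k ∧ k ≠ l ∧ i ≠ l then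
        ((2*e : ℝ) : ℂ) * ((starRingEnd ℂ) (x (i,k,l)) * x (i,k,l))
          - (starRingEnd ℂ) (x (i,k,l)) * x (i,l,k) else 0)
    = ∑ i, ∑ k, ∑ l, if i ≠ k ∧ k ≠ l ∧ i ≠ l then
        ((e * (Complex.normSq (x (i,k,l)) + Complex.normSq (x (i,l,k)))
          - ((starRingEnd ℂ) (x (i,k,l)) * x (i,l,k)).re : ℝ) : ℂ) else 0 := by
  have h2 : (∑ i, ∑ k, ∑ l, if i ≠ k ∧ k ≠ l ∧ i ≠ l then
        ((2*e : ℝ) : ℂ) * ((starRingEnd ℂ) (x (i,k,l)) * x (i,k,l))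
          - (starRingEnd ℂ) (x (i,k,l)) * x (i,l,k) else 0)
      + (∑ i, ∑ k, ∑ l, if i ≠ k ∧ k ≠ l ∧ i ≠ l then
        ((2*e : ℝ) : ℂ) * ((starRingEnd ℂ) (x (i,k,l)) * x (i,k,l))
          - (starRingEnd ℂ) (x (i,k,l)) * x (i,l,k) else 0)
      = (∑ i, ∑ k, ∑ l, if i ≠ k ∧ k ≠ l ∧ i ≠ l then
        ((e * (Complex.normSq (x (i,k,l)) + Complex.normSq (x (i,l,k)))
          - ((starRingEnd ℂ) (x (i,k,l)) * x (i,l,k)).re : ℝ) : ℂ) else 0)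
      + (∑ i, ∑ k, ∑ l, if i ≠ k ∧ k ≠ l ∧ i ≠ l then
        ((e * (Complex.normSq (x (i,k,l)) + Complex.normSq (x (i,l,k)))
          - ((starRingEnd ℂ) (x (i,k,l)) * x (i,l,k)).re : ℝ) : ℂ) else 0) := by
    nth_rewrite 2 [swap3 (fun i k l =>
      ((2*e : ℝ) : ℂ) * ((starRingEnd ℂ) (x (i,k,l)) * x (i,k,l))
        - (starRingEnd ℂ) (x (i,k,l)) * x (i,l,k))]
    nth_rewrite 2 [swap3 (fun i k l =>
      ((e * (Complex.normSq (x (i,k,l)) + Complex.normSq (x (i,l,k)))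
        - ((starRingEnd ℂ) (x (i,k,l)) * x (i,l,k)).re : ℝ) : ℂ))]
    simp only [← Finset.sum_add_distrib, ← ite_split]
    refine Finset.sum_congr rfl fun i _ => Finset.sum_congr rfl fun k _ =>
      Finset.sum_congr rfl fun l _ => ?_
    refine if_congr Iff.rfl ?_ rfl
    rw [conj_mul_self (x (i,k,l)), conj_mul_self (x (i,l,k)),
      show (starRingEnd ℂ) (x (i,l,k)) * x (i,k,l)
        = (starRingEnd ℂ) ((starRingEnd ℂ) (x (i,k,l)) * x (i,l,k)) from conj_swap _ _]
    rw [show (starRingEnd ℂ) (x (i,k,l)) * x (i,l,k)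
        = (((starRingEnd ℂ) (x (i,k,l)) * x (i,l,k)).re : ℂ)
          + (((starRingEnd ℂ) (x (i,k,l)) * x (i,l,k)).im : ℂ) * Complex.I from
      (Complex.re_add_im _).symm.trans rfl]
    simp [Complex.conj_ofReal, map_add, _root_.map_mul, Complex.conj_I]
    push_cast
    ring
  have := h2
  rw [← two_mul, ← two_mul] at this
  exact mul_left_cancel₀ two_ne_zero this

lemma Gconv (e : ℝ) (w S A : ℂ) (Ar : ℝ) (hA : A = (Ar : ℂ)) :
    ((2*e:ℝ):ℂ) * ((starRingEnd ℂ) w * w) + (((2*e:ℝ):ℂ) + 1) * A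
      - ((starRingEnd ℂ) S * w + (starRingEnd ℂ) w * S) - (starRingEnd ℂ) S * S
    = ((2*e*Complex.normSq w + (2*e+1)*Ar - 2*((starRingEnd ℂ) S * w).re
        - Complex.normSq S : ℝ) : ℂ) := by
  subst hA
  rw [conj_mul_self w, conj_mul_self S, pair_real S w]
  push_cast
  ring


lemma cs_ineq (hd : 2 ≤ d) (x : Fin d × Fin d × Fin d → ℂ) (t : Fin d) :
    Complex.normSq (Sx x t) ≤ 2 * ((d:ℝ) - 1) *
      ∑ a ∈ Finset.univ.erase t,
        (Complex.normSq (x (a,a,t)) + Complex.normSq (x (a,t,a))) := by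
  have hcard : ((Finset.univ.erase t).card : ℝ) = (d:ℝ) - 1 := by
    rw [Finset.card_erase_of_mem (Finset.mem_univ t), Finset.card_univ, Fintype.card_fin]
    have : 1 ≤ d := le_trans one_le_two hd
    push_cast [Nat.cast_sub this]
    ring
  have h1 : ‖Sx x t‖ ≤ ∑ a ∈ Finset.univ.erase t,
      ‖x (a,a,t) + x (a,t,a)‖ := norm_sum_le _ _
  have h2 : ‖Sx x t‖ ^ 2 ≤
      (∑ a ∈ Finset.univ.erase t, ‖x (a,a,t) + x (a,t,a)‖) ^ 2 :=
    pow_le_pow_left₀ (norm_nonneg _) h1 2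
  have h3 : (∑ a ∈ Finset.univ.erase t, ‖x (a,a,t) + x (a,t,a)‖) ^ 2
      ≤ ((Finset.univ.erase t).card : ℝ) * ∑ a ∈ Finset.univ.erase t,
          ‖x (a,a,t) + x (a,t,a)‖ ^ 2 := by
    exact sq_sum_le_card_mul_sum_sq
  have h4 : ∑ a ∈ Finset.univ.erase t, ‖x (a,a,t) + x (a,t,a)‖ ^ 2
      ≤ ∑ a ∈ Finset.univ.erase t,
          2 * (Complex.normSq (x (a,a,t)) + Complex.normSq (x (a,t,a))) := by
    refine Finset.sum_le_sum fun a _ => ?_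
    have htri : ‖x (a,a,t) + x (a,t,a)‖
        ≤ ‖x (a,a,t)‖ + ‖x (a,t,a)‖ := norm_add_le _ _
    have h5 : ‖x (a,a,t) + x (a,t,a)‖ ^ 2
        ≤ (‖x (a,a,t)‖ + ‖x (a,t,a)‖) ^ 2 :=
      pow_le_pow_left₀ (norm_nonneg _) htri 2
    rw [← Complex.sq_norm, ← Complex.sq_norm]
    nlinarith [sq_nonneg (‖x (a,a,t)‖ - ‖x (a,t,a)‖)]
  have hA : (0:ℝ) ≤ ∑ a ∈ Finset.univ.erase t,
      ‖x (a,a,t) + x (a,t,a)‖ ^ 2 :=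
    Finset.sum_nonneg fun a _ => sq_nonneg _
  have hd1 : (1:ℝ) ≤ (d:ℝ) - 1 := by
    have : (2:ℝ) ≤ (d:ℝ) := by exact_mod_cast hd
    linarith
  rw [← Complex.sq_norm]
  calc ‖Sx x t‖ ^ 2
      ≤ ((Finset.univ.erase t).card : ℝ) * ∑ a ∈ Finset.univ.erase t,
          ‖x (a,a,t) + x (a,t,a)‖ ^ 2 := le_trans h2 h3
    _ = ((d:ℝ) - 1) * ∑ a ∈ Finset.univ.erase t,
          ‖x (a,a,t) + x (a,t,a)‖ ^ 2 := by rw [hcard]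
    _ ≤ ((d:ℝ) - 1) * ∑ a ∈ Finset.univ.erase t,
          2 * (Complex.normSq (x (a,a,t)) + Complex.normSq (x (a,t,a))) := by
        exact mul_le_mul_of_nonneg_left h4 (by linarith)
    _ = 2 * ((d:ℝ) - 1) * ∑ a ∈ Finset.univ.erase t,
          (Complex.normSq (x (a,a,t)) + Complex.normSq (x (a,t,a))) := by
        rw [← Finset.mul_sum]; ring

lemma Rt_nonneg (hd : 2 ≤ d) (x : Fin d × Fin d × Fin d → ℂ) (t : Fin d) :
    0 ≤ 2 * ((d:ℝ)-1) * Complex.normSq (x (t,t,t))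
      + (2*((d:ℝ)-1)+1) * (∑ a ∈ Finset.univ.erase t,
          (Complex.normSq (x (a,a,t)) + Complex.normSq (x (a,t,a))))
      - 2 * ((starRingEnd ℂ) (Sx x t) * x (t,t,t)).re
      - Complex.normSq (Sx x t) := by
  have hA0 : 0 ≤ ∑ a ∈ Finset.univ.erase t,
      (Complex.normSq (x (a,a,t)) + Complex.normSq (x (a,t,a))) :=
    Finset.sum_nonneg fun a _ =>
      add_nonneg (Complex.normSq_nonneg _) (Complex.normSq_nonneg _)
  have hcs := cs_ineq hd x t
  have hre : ((starRingEnd ℂ) (Sx x t) * x (t,t,t)).re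
      ≤ ‖Sx x t‖ * ‖x (t,t,t)‖ := by
    calc ((starRingEnd ℂ) (Sx x t) * x (t,t,t)).re
        ≤ ‖(starRingEnd ℂ) (Sx x t) * x (t,t,t)‖ := Complex.re_le_norm _
      _ = ‖Sx x t‖ * ‖x (t,t,t)‖ := by
          rw [norm_mul, Complex.norm_conj]
  have hd1 : (1:ℝ) ≤ (d:ℝ) - 1 := by
    have : (2:ℝ) ≤ (d:ℝ) := by exact_mod_cast hd
    linarith
  have haw : 0 ≤ ‖x (t,t,t)‖ := norm_nonneg _
  have has : 0 ≤ ‖Sx x t‖ := norm_nonneg _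
  have hw : Complex.normSq (x (t,t,t)) = ‖x (t,t,t)‖ ^ 2 :=
    (Complex.sq_norm _).symm
  have hs : Complex.normSq (Sx x t) = ‖Sx x t‖ ^ 2 :=
    (Complex.sq_norm _).symm
  rw [hs] at hcs
  rw [hw, hs]
  nlinarith [hcs, hre, hA0, haw, has, hd1,
    sq_nonneg (2*((d:ℝ)-1)*‖x (t,t,t)‖ - ‖Sx x t‖),
    mul_le_mul_of_nonneg_left hcs (show (0:ℝ) ≤ 2*((d:ℝ)-1)+1 by linarith),
    mul_le_mul_of_nonneg_left hre (show (0:ℝ) ≤ 4*((d:ℝ)-1) by linarith)]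


lemma rD_nonneg (e : ℝ) (he : 1 ≤ e) (a b : ℂ) :
    0 ≤ e * (Complex.normSq a + Complex.normSq b) - ((starRingEnd ℂ) a * b).re := by
  have hre : ((starRingEnd ℂ) a * b).re ≤ ‖a‖ * ‖b‖ := by
    calc ((starRingEnd ℂ) a * b).re ≤ ‖(starRingEnd ℂ) a * b‖ :=
          Complex.re_le_norm _
      _ = ‖a‖ * ‖b‖ := by rw [norm_mul, Complex.norm_conj]
  have h1 : Complex.normSq a = ‖a‖ ^ 2 := (Complex.sq_norm _).symm
  have h2 : Complex.normSq b = ‖b‖ ^ 2 := (Complex.sq_norm _).symm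
  nlinarith [sq_nonneg (‖a‖ - ‖b‖), norm_nonneg a,
    norm_nonneg b]

lemma ofReal_ite (c : Prop) [Decidable c] (r : ℝ) :
    ((if c then r else 0 : ℝ) : ℂ) = if c then (r:ℂ) else 0 := by
  split_ifs <;> simp

lemma posSemidef_of_quad {m : Type*} [Fintype m] [DecidableEq m] (M : Matrix m m ℂ)
    (h : ∀ x : m → ℂ, ∃ r : ℝ, 0 ≤ r ∧ star x ⬝ᵥ (M *ᵥ x) = (r : ℂ)) : M.PosSemidef := by
  rw [Matrix.posSemidef_iff_dotProduct_mulVec]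
  constructor
  · rw [Matrix.isHermitian_iff_isSymmetric, LinearMap.isSymmetric_iff_inner_map_self_real]
    rw [(WithLp.equiv 2 (m → ℂ)).symm.surjective.forall]
    intro x
    simp only [WithLp.equiv_symm_apply, Matrix.toEuclideanLin_toLp,
      EuclideanSpace.inner_toLp_toLp, Matrix.toLin'_apply]
    rw [dotProduct_comm]
    obtain ⟨r, hr, hq⟩ := h x
    have h1 : star (M *ᵥ x) ⬝ᵥ x = (starRingEnd ℂ) (star x ⬝ᵥ (M *ᵥ x)) := by
      simp [dotProduct, Finset.mul_sum, map_sum, mul_comm]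
    rw [h1, hq]
    simp
  · intro x
    obtain ⟨r, hr, hq⟩ := h x
    rw [hq]
    exact_mod_cast Complex.zero_le_real.mpr hr

end DualAux

/-- the dual operator `Ẑ = (2(d-1)/d³)(X_1+X_2+X_3+X_6) - (1/d³)(X_4+X_5+X_7+X_8+X_9)`
is positive semidefinite for all `d ≥ 2`. -/
theorem dual_posSemidef (d : ℕ) (hd : 2 ≤ d) :
    ((2 * ((d:ℂ) - 1) / (d:ℂ)^3) • (X1 d + X2 d + X3 d + X6 d)
      - ((d:ℂ)^3)⁻¹ • (X4 d + X5 d + X7 d + X8 d + X9 d)).PosSemidef := by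
  classical
  apply DualAux.posSemidef_of_quad
  intro x
  have hd1 : (1:ℝ) ≤ (d:ℝ) - 1 := by
    have : (2:ℝ) ≤ (d:ℝ) := by exact_mod_cast hd
    linarith
  refine ⟨((∑ t, (2 * ((d:ℝ)-1) * Complex.normSq (x (t,t,t))
        + (2*((d:ℝ)-1)+1) * (∑ a ∈ Finset.univ.erase t,
            (Complex.normSq (x (a,a,t)) + Complex.normSq (x (a,t,a))))
        - 2 * ((starRingEnd ℂ) (DualAux.Sx x t) * x (t,t,t)).re
        - Complex.normSq (DualAux.Sx x t)))
      + (∑ i, ∑ k, if i ≠ k then 2*((d:ℝ)-1) * Complex.normSq (x (k,i,i)) else 0)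
      + (∑ i, ∑ k, ∑ l, if i ≠ k ∧ k ≠ l ∧ i ≠ l then
          (((d:ℝ)-1) * (Complex.normSq (x (i,k,l)) + Complex.normSq (x (i,l,k)))
            - ((starRingEnd ℂ) (x (i,k,l)) * x (i,l,k)).re) else 0)) / (d:ℝ)^3,
    ?_, ?_⟩
  · refine div_nonneg (add_nonneg (add_nonneg ?_ ?_) ?_) (by positivity)
    · exact Finset.sum_nonneg fun t _ => DualAux.Rt_nonneg hd x t
    · refine Finset.sum_nonneg fun i _ => Finset.sum_nonneg fun k _ => ?_
      split_ifs
      · have := Complex.normSq_nonneg (x (k,i,i))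
        nlinarith
      · exact le_refl 0
    · refine Finset.sum_nonneg fun i _ => Finset.sum_nonneg fun k _ =>
        Finset.sum_nonneg fun l _ => ?_
      split_ifs
      · exact DualAux.rD_nonneg _ hd1 _ _
      · exact le_refl 0
  · simp only [Matrix.sub_mulVec, Matrix.smul_mulVec, dotProduct_sub,
      dotProduct_smul, smul_eq_mul, DualAux.quad_add, DualAux.q1, DualAux.q2,
      DualAux.q3, DualAux.q4, DualAux.q5, DualAux.q6, DualAux.q7, DualAux.q8, DualAux.q9]
    have h5 : (∑ t, ∑ a ∈ Finset.univ.erase t,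
          ((starRingEnd ℂ) (x (a,a,t)) * x (a,t,a) + (starRingEnd ℂ) (x (a,t,a)) * x (a,a,t)))
        + ((∑ t, ∑ a ∈ Finset.univ.erase t, ∑ b ∈ (Finset.univ.erase t).erase a,
              (starRingEnd ℂ) (x (a,a,t)) * x (b,t,b))
          + ∑ t, ∑ a ∈ Finset.univ.erase t, ∑ b ∈ (Finset.univ.erase t).erase a,
              (starRingEnd ℂ) (x (a,t,a)) * x (b,b,t))
        + ((∑ t, ∑ a ∈ Finset.univ.erase t, ∑ b ∈ (Finset.univ.erase t).erase a,
              (starRingEnd ℂ) (x (a,a,t)) * x (b,b,t))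
          + ∑ t, ∑ a ∈ Finset.univ.erase t, ∑ b ∈ (Finset.univ.erase t).erase a,
              (starRingEnd ℂ) (x (a,t,a)) * x (b,t,b))
        = ∑ t, ((starRingEnd ℂ) (DualAux.Sx x t) * DualAux.Sx x t - DualAux.Ac x t) := by
      simp only [← Finset.sum_add_distrib]
      refine Finset.sum_congr rfl fun t _ => ?_
      have hp := DualAux.perT (Finset.univ.erase t) (fun a => x (a,a,t)) (fun a => x (a,t,a))
      simp only [← Finset.sum_add_distrib] at hp
      simp only [DualAux.Sx, DualAux.Ac]
      exact hp
    have hT : ((2*((d:ℝ)-1) : ℝ) : ℂ) * (∑ t, (starRingEnd ℂ) (x (t,t,t)) * x (t,t,t))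
        + ((2*((d:ℝ)-1) : ℝ) : ℂ) * (∑ t, DualAux.Ac x t)
        - (∑ t, ((starRingEnd ℂ) (DualAux.Sx x t) * x (t,t,t)
            + (starRingEnd ℂ) (x (t,t,t)) * DualAux.Sx x t))
        - (∑ t, ((starRingEnd ℂ) (DualAux.Sx x t) * DualAux.Sx x t - DualAux.Ac x t))
        = ((∑ t, (2 * ((d:ℝ)-1) * Complex.normSq (x (t,t,t))
            + (2*((d:ℝ)-1)+1) * (∑ a ∈ Finset.univ.erase t,
                (Complex.normSq (x (a,a,t)) + Complex.normSq (x (a,t,a))))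
            - 2 * ((starRingEnd ℂ) (DualAux.Sx x t) * x (t,t,t)).re
            - Complex.normSq (DualAux.Sx x t)) : ℝ) : ℂ) := by
      rw [Complex.ofReal_sum]
      conv_lhs => simp only [Finset.mul_sum, ← Finset.sum_add_distrib, ← Finset.sum_sub_distrib]
      refine Finset.sum_congr rfl fun t _ => ?_
      have hG := DualAux.Gconv ((d:ℝ)-1) (x (t,t,t)) (DualAux.Sx x t) (DualAux.Ac x t)
        _ (DualAux.AcReal x t)
      linear_combination hG
    have h2 : ((2*((d:ℝ)-1) : ℝ) : ℂ) * (∑ i, ∑ k,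
          if i ≠ k then (starRingEnd ℂ) (x (k,i,i)) * x (k,i,i) else 0)
        = ((∑ i, ∑ k, if i ≠ k then 2*((d:ℝ)-1) * Complex.normSq (x (k,i,i)) else 0 : ℝ) : ℂ) := by
      simp only [Finset.mul_sum, Complex.ofReal_sum, DualAux.ofReal_ite, mul_ite, mul_zero]
      refine Finset.sum_congr rfl fun i _ => Finset.sum_congr rfl fun k _ => ?_
      refine if_congr Iff.rfl ?_ rfl
      rw [DualAux.conj_mul_self]
      push_cast
      ring
    have hD : ((2*((d:ℝ)-1) : ℝ) : ℂ) * (∑ i, ∑ k, ∑ l,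
          if i ≠ k ∧ k ≠ l ∧ i ≠ l then (starRingEnd ℂ) (x (i,k,l)) * x (i,k,l) else 0)
        - (∑ i, ∑ k, ∑ l,
          if i ≠ k ∧ k ≠ l ∧ i ≠ l then (starRingEnd ℂ) (x (i,k,l)) * x (i,l,k) else 0)
        = ((∑ i, ∑ k, ∑ l, if i ≠ k ∧ k ≠ l ∧ i ≠ l then
            (((d:ℝ)-1) * (Complex.normSq (x (i,k,l)) + Complex.normSq (x (i,l,k)))
              - ((starRingEnd ℂ) (x (i,k,l)) * x (i,l,k)).re) else 0 : ℝ) : ℂ) := by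
      have hstep : ((2*((d:ℝ)-1) : ℝ) : ℂ) * (∑ i, ∑ k, ∑ l,
            if i ≠ k ∧ k ≠ l ∧ i ≠ l then (starRingEnd ℂ) (x (i,k,l)) * x (i,k,l) else 0)
          - (∑ i, ∑ k, ∑ l,
            if i ≠ k ∧ k ≠ l ∧ i ≠ l then (starRingEnd ℂ) (x (i,k,l)) * x (i,l,k) else 0)
          = ∑ i, ∑ k, ∑ l, if i ≠ k ∧ k ≠ l ∧ i ≠ l then
              ((2*((d:ℝ)-1) : ℝ) : ℂ) * ((starRingEnd ℂ) (x (i,k,l)) * x (i,k,l))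
                - (starRingEnd ℂ) (x (i,k,l)) * x (i,l,k) else 0 := by
        simp only [Finset.mul_sum, ← Finset.sum_sub_distrib]
        refine Finset.sum_congr rfl fun i _ => Finset.sum_congr rfl fun k _ =>
          Finset.sum_congr rfl fun l _ => ?_
        split_ifs <;> simp
      rw [hstep, DualAux.Dconv ((d:ℝ)-1) x]
      simp only [Complex.ofReal_sum, DualAux.ofReal_ite]
    have heq : ((2*((d:ℝ)-1) : ℝ) : ℂ) = 2*((d:ℂ)-1) := by push_cast; ring
    have hr : ∀ a b c : ℝ, ((((a + b + c) / (d:ℝ)^3) : ℝ) : ℂ)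
        = ((d:ℂ)^3)⁻¹ * ((a:ℂ) + (b:ℂ) + (c:ℂ)) := by
      intro a b c
      push_cast
      ring
    rw [hr]
    linear_combination ((d:ℂ)^3)⁻¹ * hT + ((d:ℂ)^3)⁻¹ * h2 + ((d:ℂ)^3)⁻¹ * hD
      - ((d:ℂ)^3)⁻¹ * h5
      - ((∑ t, (starRingEnd ℂ) (x (t,t,t)) * x (t,t,t)) + (∑ t, DualAux.Ac x t)
        + (∑ i, ∑ k, if i ≠ k then (starRingEnd ℂ) (x (k,i,i)) * x (k,i,i) else 0)
        + (∑ i, ∑ k, ∑ l,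
            if i ≠ k ∧ k ≠ l ∧ i ≠ l then (starRingEnd ℂ) (x (i,k,l)) * x (i,k,l) else 0))
          * (((d:ℂ)^3)⁻¹) * heq
end

section
/- For the channel E with Choi matrix J(E) = (1/(d-1)) Σ_{i≠j}(|ij⟩⟨ij| + |ij⟩⟨ji|), the average over phase tuples θ (uniform on [0,2π)^d) of the fidelity ⟨-θ| E(|θ⟩⟨θ|) |-θ⟩ equals 2/d. -/
open scoped BigOperators
open Matrix MeasureTheory

noncomputable section

/-- `J(E) = (1/(d-1)) Σ_{i≠j} (|ij⟩⟨ij| + |ij⟩⟨ji|)`. -/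
def Jopt (d : ℕ) : Matrix (Fin d × Fin d) (Fin d × Fin d) ℂ :=
  ((d : ℂ) - 1)⁻¹ • ∑ i : Fin d, ∑ j : Fin d,
    if i ≠ j then
      Matrix.single (i, j) (i, j) (1 : ℂ) +
      Matrix.single (i, j) (j, i) (1 : ℂ)
    else 0

/-- The maximally coherent state `|θ⟩`. -/
def coherentKet (d : ℕ) (θ : Fin d → ℝ) : Fin d → ℂ :=
  fun k => (1 / Real.sqrt d : ℝ) * Complex.exp (Complex.I * (θ k))

/-- The channel `E(ρ) = Tr_1[J(E)(ρ^T ⊗ 𝟙)]`. -/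
def chan (d : ℕ) (ρ : Matrix (Fin d) (Fin d) ℂ) : Matrix (Fin d) (Fin d) ℂ :=
  Matrix.of fun i j => ∑ a : Fin d,
    (Jopt d * (ρ.transpose.kroneckerMap (· * ·) (1 : Matrix (Fin d) (Fin d) ℂ))) (a, i) (a, j)

/-- The pure state `|θ⟩⟨θ|`. -/
def rhoTheta (d : ℕ) (θ : Fin d → ℝ) : Matrix (Fin d) (Fin d) ℂ :=
  Matrix.of fun i j => coherentKet d θ i * (starRingEnd ℂ) (coherentKet d θ j)

/-- The fidelity `⟨-θ| E(|θ⟩⟨θ|) |-θ⟩`. -/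
def fidTheta (d : ℕ) (θ : Fin d → ℝ) : ℂ :=
  ∑ i : Fin d, ∑ j : Fin d,
    (starRingEnd ℂ) (coherentKet d (fun k => -θ k) i) *
      (chan d (rhoTheta d θ)) i j * coherentKet d (fun k => -θ k) j

end

noncomputable section AuxProofs

lemma Jopt_apply (d : ℕ) (a i : Fin d) (p : Fin d × Fin d) :
    Jopt d (a, i) p = ((d : ℂ) - 1)⁻¹ *
      (if a ≠ i then (if p = (a, i) then 1 else 0) + (if p = (i, a) then 1 else 0) else 0) := by
  simp only [Jopt, Matrix.smul_apply, Matrix.sum_apply, smul_eq_mul]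
  congr 1
  have h : ∀ k l : Fin d,
      (if k ≠ l then
        Matrix.single (k, l) (k, l) (1 : ℂ) +
        Matrix.single (k, l) (l, k) (1 : ℂ) else 0) (a, i) p
      = if k = a then (if l = i then
          (if a ≠ i then (if p = (a, i) then 1 else 0) + (if p = (i, a) then 1 else 0) else 0)
          else 0) else 0 := by
    intro k l
    by_cases hk : k = a
    · by_cases hl : l = i
      · subst hk; subst hl
        simp [apply_ite (fun M : Matrix (Fin d × Fin d) (Fin d × Fin d) ℂ => M (k, l) p),
          Matrix.single, Matrix.add_apply, eq_comm]
      · simp [apply_ite (fun M : Matrix (Fin d × Fin d) (Fin d × Fin d) ℂ => M (a, i) p),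
          Matrix.single, Matrix.add_apply, hl, Prod.ext_iff]
    · simp [apply_ite (fun M : Matrix (Fin d × Fin d) (Fin d × Fin d) ℂ => M (a, i) p),
        Matrix.single, Matrix.add_apply, hk, Prod.ext_iff]
  simp only [h]
  simp

lemma chan_apply (d : ℕ) (ρ : Matrix (Fin d) (Fin d) ℂ) (i j : Fin d) :
    chan d ρ i j = ((d : ℂ) - 1)⁻¹ *
      ((if j = i then ∑ x : Fin d, (if x = i then 0 else ρ x x) else 0) +
       (if j = i then 0 else ρ j i)) := by
  simp only [chan, Matrix.of_apply, Matrix.mul_apply, Fintype.sum_prod_type, Jopt_apply,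
    Matrix.kroneckerMap_apply, Matrix.transpose_apply, Matrix.one_apply, Prod.mk.injEq]
  simp only [ite_and, mul_ite, mul_zero, mul_one, ite_mul, zero_mul, one_mul,
    Finset.sum_ite_eq, Finset.sum_ite_eq', Finset.mem_univ, if_true, add_mul,
    Finset.sum_add_distrib]
  have key : ∀ x : Fin d,
      (∑ x1 : Fin d,
        if x ≠ i then
          ((d : ℂ) - 1)⁻¹ *
              ((if x1 = x then if j = i then 1 else 0 else 0) +
                if x1 = i then if j = x then 1 else 0 else 0) * ρ x x1
        else 0)
      = if x = i then 0 else
          ((d : ℂ) - 1)⁻¹ * ((if j = i then ρ x x else 0) + (if j = x then ρ x i else 0)) := by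
    intro x
    by_cases hx : x = i
    · simp [hx]
    · simp only [hx, ne_eq, not_false_iff, if_true, if_false, mul_add, add_mul, ite_mul,
        zero_mul, mul_ite, mul_zero, mul_one, Finset.sum_add_distrib, Finset.sum_ite_eq,
        Finset.sum_ite_eq', Finset.mem_univ, if_true]
  rw [Finset.sum_congr rfl (fun x _ => key x)]
  by_cases hji : j = i
  · subst hji
    simp only [if_pos rfl, add_zero, eq_self_iff_true, if_true]
    rw [Finset.mul_sum]
    apply Finset.sum_congr rfl
    intro x _
    by_cases hx : x = j
    · simp [hx]
    · have hjx : ¬ j = x := fun h => hx h.symm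
      simp [hx, hjx]
  · simp only [hji, if_false, zero_add]
    have key2 : ∀ x : Fin d, (if x = i then 0 else
        ((d : ℂ) - 1)⁻¹ * (if j = x then ρ x i else 0))
        = if x = j then ((d : ℂ) - 1)⁻¹ * ρ j i else 0 := by
      intro x
      by_cases hx : x = i
      · subst hx
        have : ¬ x = j := fun h => hji h.symm
        simp [this]
      · by_cases hxj : x = j
        · subst hxj; simp [hx]
        · have : ¬ j = x := fun h => hxj h.symm
          simp [hx, hxj, this]
    rw [Finset.sum_congr rfl (fun x _ => key2 x)]
    simp

lemma hconj (x : ℝ) : (starRingEnd ℂ) (Complex.exp (Complex.I * x)) =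
    Complex.exp (-(Complex.I * x)) := by
  rw [← Complex.exp_conj]; congr 1
  simp [Complex.conj_ofReal]

lemma hconj' (x : ℝ) : (starRingEnd ℂ) (Complex.exp (-(Complex.I * x))) =
    Complex.exp (Complex.I * x) := by
  rw [← Complex.exp_conj]; congr 1
  simp [Complex.conj_ofReal]

lemma hE (x : ℝ) : Complex.exp (Complex.I * x) * Complex.exp (-(Complex.I * x)) = 1 := by
  rw [← Complex.exp_add, add_neg_cancel, Complex.exp_zero]

lemma s2 (d : ℕ) :
    ((1 / Real.sqrt d : ℝ) : ℂ) * ((1 / Real.sqrt d : ℝ) : ℂ) = 1 / (d : ℂ) := by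
  have h : (1 / Real.sqrt d) * (1 / Real.sqrt d) = 1 / (d : ℝ) := by
    rw [div_mul_div_comm, one_mul, Real.mul_self_sqrt (by positivity)]
  rw [← Complex.ofReal_mul, h]; push_cast; ring

lemma rho_diag (d : ℕ) (θ : Fin d → ℝ) (a : Fin d) :
    rhoTheta d θ a a = 1 / (d : ℂ) := by
  simp only [rhoTheta, coherentKet, Matrix.of_apply, _root_.map_mul, Complex.conj_ofReal, hconj]
  have e1 := hE (θ a); have e3 := s2 d
  linear_combination (Complex.exp (Complex.I * (θ a)) * Complex.exp (-(Complex.I * (θ a)))) * e3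
    + (1/(d:ℂ)) * e1

lemma ket_norm (d : ℕ) (θ : Fin d → ℝ) (i : Fin d) :
    (starRingEnd ℂ) (coherentKet d (fun k => -θ k) i) * coherentKet d (fun k => -θ k) i
      = 1 / (d : ℂ) := by
  simp only [coherentKet, _root_.map_mul, Complex.conj_ofReal, hconj', Complex.ofReal_neg,
    mul_neg, neg_neg]
  have e1 := hE (θ i); have e3 := s2 d
  set s := ((1 / Real.sqrt d : ℝ) : ℂ)
  linear_combination (s*s) * e1 + e3

lemma cross (d : ℕ) (θ : Fin d → ℝ) (i j : Fin d) :
    (starRingEnd ℂ) (coherentKet d (fun k => -θ k) i) * rhoTheta d θ j i *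
      coherentKet d (fun k => -θ k) j = (1 / (d : ℂ)) * (1 / (d : ℂ)) := by
  simp only [rhoTheta, coherentKet, Matrix.of_apply, _root_.map_mul, Complex.conj_ofReal,
    hconj, hconj', Complex.ofReal_neg, mul_neg, neg_neg]
  set s := ((1 / Real.sqrt d : ℝ) : ℂ) with hs
  set A := Complex.exp (Complex.I * (θ i)) with hA
  set B := Complex.exp (-(Complex.I * (θ i))) with hB
  set C := Complex.exp (Complex.I * (θ j)) with hC
  set D := Complex.exp (-(Complex.I * (θ j))) with hD
  have e1 : A * B = 1 := hE (θ i)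
  have e2 : C * D = 1 := hE (θ j)
  have e3 : s * s = 1 / (d : ℂ) := s2 d
  linear_combination (s*s*s*s*C*D) * e1 + (s*s*s*s) * e2 + (s*s + 1/(d:ℂ)) * e3

lemma fid_const (d : ℕ) (hd : 2 ≤ d) (θ : Fin d → ℝ) :
    fidTheta d θ = 2 / (d : ℂ) := by
  have hd0 : (d : ℂ) ≠ 0 := by
    exact_mod_cast Nat.cast_ne_zero.mpr (by omega)
  have hd1 : (d : ℂ) - 1 ≠ 0 := sub_ne_zero.mpr (by
    intro h
    have : d = 1 := by exact_mod_cast h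
    omega)
  have hdiagsum : ∀ i : Fin d,
      (∑ x : Fin d, (if x = i then 0 else rhoTheta d θ x x)) = ((d : ℂ) - 1) * (1 / d) := by
    intro i
    have h1 : ∀ x : Fin d, (if x = i then (0:ℂ) else rhoTheta d θ x x)
        = 1/(d:ℂ) - (if x = i then 1/(d:ℂ) else 0) := by
      intro x
      by_cases hx : x = i <;> simp [hx, rho_diag]
    rw [Finset.sum_congr rfl (fun x _ => h1 x), Finset.sum_sub_distrib, Finset.sum_const,
      Finset.sum_ite_eq' Finset.univ i (fun _ => 1/(d:ℂ))]
    simp [Finset.card_univ, nsmul_eq_mul]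
    ring
  have hT : ∀ i j : Fin d,
      (starRingEnd ℂ) (coherentKet d (fun k => -θ k) i) *
        (chan d (rhoTheta d θ)) i j * coherentKet d (fun k => -θ k) j
      = if j = i then (1/(d:ℂ)) * (1/(d:ℂ))
        else ((d:ℂ) - 1)⁻¹ * ((1/(d:ℂ)) * (1/(d:ℂ))) := by
    intro i j
    rw [chan_apply]
    by_cases hji : j = i
    · subst hji
      simp only [if_pos rfl, add_zero, eq_self_iff_true, if_true]
      rw [hdiagsum j, inv_mul_cancel_left₀ hd1]
      have := ket_norm d θ j
      calc (starRingEnd ℂ) (coherentKet d (fun k => -θ k) j) * (1/(d:ℂ)) *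
            coherentKet d (fun k => -θ k) j
          = ((starRingEnd ℂ) (coherentKet d (fun k => -θ k) j) *
              coherentKet d (fun k => -θ k) j) * (1/(d:ℂ)) := by ring
        _ = (1/(d:ℂ)) * (1/(d:ℂ)) := by rw [this]
    · simp only [hji, if_false, zero_add]
      have := cross d θ i j
      calc (starRingEnd ℂ) (coherentKet d (fun k => -θ k) i) *
            (((d:ℂ) - 1)⁻¹ * rhoTheta d θ j i) * coherentKet d (fun k => -θ k) j
          = ((d:ℂ) - 1)⁻¹ * ((starRingEnd ℂ) (coherentKet d (fun k => -θ k) i) *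
              rhoTheta d θ j i * coherentKet d (fun k => -θ k) j) := by ring
        _ = ((d:ℂ) - 1)⁻¹ * ((1/(d:ℂ)) * (1/(d:ℂ))) := by rw [this]
  unfold fidTheta
  rw [Finset.sum_congr rfl (fun i _ => Finset.sum_congr rfl (fun j _ => hT i j))]
  have hinner : ∀ i : Fin d,
      (∑ j : Fin d, (if j = i then (1/(d:ℂ)) * (1/(d:ℂ))
        else ((d:ℂ) - 1)⁻¹ * ((1/(d:ℂ)) * (1/(d:ℂ)))))
      = (1/(d:ℂ)) * (1/(d:ℂ)) + ((d:ℂ) - 1) * (((d:ℂ) - 1)⁻¹ * ((1/(d:ℂ)) * (1/(d:ℂ)))) := by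
    intro i
    have h1 : ∀ j : Fin d, (if j = i then (1/(d:ℂ)) * (1/(d:ℂ))
          else ((d:ℂ) - 1)⁻¹ * ((1/(d:ℂ)) * (1/(d:ℂ))))
        = ((d:ℂ) - 1)⁻¹ * ((1/(d:ℂ)) * (1/(d:ℂ)))
          + (if j = i then (1/(d:ℂ)) * (1/(d:ℂ)) - ((d:ℂ) - 1)⁻¹ * ((1/(d:ℂ)) * (1/(d:ℂ)))
             else 0) := by
      intro j
      by_cases hj : j = i <;> simp [hj]
    rw [Finset.sum_congr rfl (fun j _ => h1 j), Finset.sum_add_distrib, Finset.sum_const,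
      Finset.sum_ite_eq' Finset.univ i]
    simp [Finset.card_univ, nsmul_eq_mul]
    ring
  rw [Finset.sum_congr rfl (fun i _ => hinner i), Finset.sum_const]
  simp only [Finset.card_univ, Fintype.card_fin, nsmul_eq_mul]
  field_simp
  ring

end AuxProofs

/-- the average over `θ` uniform on `[0,2π)^d` of `⟨-θ|E(|θ⟩⟨θ|)|-θ⟩`
equals `2/d`. -/
theorem average_transpose_fidelity (d : ℕ) (hd : 2 ≤ d) :
    ((2 * Real.pi : ℂ)^d)⁻¹ *
      (∫ θ in Set.univ.pi (fun _ : Fin d => Set.Ico (0:ℝ) (2 * Real.pi)), fidTheta d θ)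
      = 2 / (d : ℂ) := by
  have hfid : ∀ θ : Fin d → ℝ, fidTheta d θ = 2 / (d : ℂ) := fid_const d hd
  simp only [hfid]
  rw [MeasureTheory.setIntegral_const]
  have hvol : volume (Set.univ.pi (fun _ : Fin d => Set.Ico (0:ℝ) (2 * Real.pi)))
      = ENNReal.ofReal (2 * Real.pi) ^ d := by
    rw [MeasureTheory.volume_pi_pi]
    simp [Real.volume_Ico]
  rw [MeasureTheory.measureReal_def, hvol]
  have hπ : (0:ℝ) ≤ 2 * Real.pi := by positivity
  have : ((ENNReal.ofReal (2 * Real.pi)) ^ d).toReal = (2 * Real.pi) ^ d := by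
    rw [ENNReal.toReal_pow, ENNReal.toReal_ofReal hπ]
  rw [this]
  rw [Complex.real_smul]
  push_cast
  rw [← mul_assoc, inv_mul_cancel₀ (pow_ne_zero d (mul_ne_zero two_ne_zero (Complex.ofReal_ne_zero.mpr Real.pi_ne_zero))), one_mul]
end

section
/- Subject to c_+, c_-, c_0 ≥ 0 and the trace constraint ((d²+3d+2)/6)c_+ + ((d²-3d+2)/6)c_- + (2(d²-1)/3)c_0 = 1, the maximum of c_+ is 6/(d²+3d+2), attained at c_- = c_0 = 0. Consequently the optimal process fidelity of the 1→2 universal transpose cloning map is 6/(d²+3d+2). -/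
/-- subject to `c₊, c₋, c₀ ≥ 0` and the trace constraint
`((d²+3d+2)/6)c₊ + ((d²-3d+2)/6)c₋ + (2(d²-1)/3)c₀ = 1`, the maximum of `c₊` is
`6/(d²+3d+2)`, attained at `c₋ = c₀ = 0`.  This is the optimal process fidelity of the
1→2 universal transpose cloning map. -/
theorem universal_transpose_cloning_LP (d : ℕ) (hd : 2 ≤ d) :
    IsGreatest {cp : ℝ | ∃ cm c0 : ℝ,
        0 ≤ cp ∧ 0 ≤ cm ∧ 0 ≤ c0 ∧
        (((d:ℝ)^2 + 3*(d:ℝ) + 2)/6) * cp + (((d:ℝ)^2 - 3*(d:ℝ) + 2)/6) * cm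
          + (2*((d:ℝ)^2 - 1)/3) * c0 = 1}
      (6 / ((d:ℝ)^2 + 3*(d:ℝ) + 2)) ∧
    (((d:ℝ)^2 + 3*(d:ℝ) + 2)/6) * (6 / ((d:ℝ)^2 + 3*(d:ℝ) + 2))
      + (((d:ℝ)^2 - 3*(d:ℝ) + 2)/6) * 0 + (2*((d:ℝ)^2 - 1)/3) * 0 = 1 := by
  have hd2 : (2:ℝ) ≤ (d:ℝ) := by exact_mod_cast hd
  have hA : (0:ℝ) < (d:ℝ)^2 + 3*(d:ℝ) + 2 := by nlinarith
  have heq : (((d:ℝ)^2 + 3*(d:ℝ) + 2)/6) * (6 / ((d:ℝ)^2 + 3*(d:ℝ) + 2))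
      + (((d:ℝ)^2 - 3*(d:ℝ) + 2)/6) * 0 + (2*((d:ℝ)^2 - 1)/3) * 0 = 1 := by
    field_simp
    ring
  refine ⟨⟨⟨0, 0, by positivity, le_refl 0, le_refl 0, heq⟩, ?_⟩, heq⟩
  rintro x ⟨cm, c0, hx, hcm, hc0, hcon⟩
  have hB : (0:ℝ) ≤ (d:ℝ)^2 - 3*(d:ℝ) + 2 := by nlinarith
  have hC : (0:ℝ) ≤ 2*((d:ℝ)^2 - 1)/3 := by nlinarith
  rw [le_div_iff₀ hA]
  nlinarith [mul_nonneg hB hcm, mul_nonneg hC hc0]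
end

section
/- For d ≥ 3, with k_d = 1/((d-1)(d-2)), the operator X = k_d(X_4 + X_5 + X_6) on (ℂ^d)^{⊗3} is positive semidefinite, satisfies Tr_{23} X = 𝟙, and Tr[(φ_d^+)^{⊗3} X] = 6/d². -/
open scoped BigOperators ComplexOrder
open Matrix

noncomputable section

def Y1 (d : ℕ) := ∑ i : Fin d, E3 d (i,i,i) (i,i,i)

def Y2 (d : ℕ) := ∑ i : Fin d, ∑ k : Fin d,
  if i ≠ k then E3 d (i,i,k) (i,i,k) + E3 d (i,k,i) (i,k,i) + E3 d (k,i,i) (k,i,i) else 0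

def Y3 (d : ℕ) := ∑ i : Fin d, ∑ k : Fin d,
  if i ≠ k then E3 d (i,i,k) (k,i,i) + E3 d (k,i,i) (i,i,k) + E3 d (k,i,i) (i,k,i)
    + E3 d (i,i,k) (i,k,i) + E3 d (i,k,i) (i,i,k) else 0

def Y4 (d : ℕ) := ∑ i : Fin d, ∑ k : Fin d, ∑ l : Fin d,
  if i ≠ k ∧ k ≠ l ∧ i ≠ l then E3 d (i,k,l) (i,k,l) else 0

def Y5 (d : ℕ) := ∑ i : Fin d, ∑ k : Fin d, ∑ l : Fin d,
  if i ≠ k ∧ k ≠ l ∧ i ≠ l then E3 d (i,k,l) (k,l,i) + E3 d (i,k,l) (l,i,k) else 0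

def Y6 (d : ℕ) := ∑ i : Fin d, ∑ k : Fin d, ∑ l : Fin d,
  if i ≠ k ∧ k ≠ l ∧ i ≠ l then
    E3 d (i,k,l) (k,i,l) + E3 d (i,k,l) (l,k,i) + E3 d (i,k,l) (i,l,k) else 0

end

noncomputable section Aux

namespace TCaux

lemma ite_entry {m n α : Type*} [Zero α] (P : Prop) [Decidable P]
    (A B : Matrix m n α) (r : m) (s : n) :
    (if P then A else B) r s = if P then A r s else B r s := by
  split_ifs <;> rfl

lemma triple_collapse {M : Type*} [AddCommMonoid M] {d : ℕ}
    (f : Fin d → Fin d → Fin d → M) (a b c : Fin d)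
    (h : ∀ i k l, ¬(i = a ∧ k = b ∧ l = c) → f i k l = 0) :
    (∑ i, ∑ k, ∑ l, f i k l) = f a b c := by
  rw [Finset.sum_eq_single a, Finset.sum_eq_single b, Finset.sum_eq_single c]
  · intro l _ hl; exact h a b l (by tauto)
  · simp
  · intro k _ hk
    rw [Finset.sum_eq_zero]; intro l _; exact h a k l (by tauto)
  · simp
  · intro i _ hi
    rw [Finset.sum_eq_zero]; intro k _
    rw [Finset.sum_eq_zero]; intro l _; exact h i k l (by tauto)
  · simp

variable (d : ℕ)

/-- the symmetrizer (times 6), entrywise -/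
def Tm : Matrix (Fin d × Fin d × Fin d) (Fin d × Fin d × Fin d) ℂ :=
  Matrix.of fun p q =>
    (if q = (p.1, p.2.1, p.2.2) then (1:ℂ) else 0)
    + (if q = (p.2.1, p.2.2, p.1) then 1 else 0)
    + (if q = (p.2.2, p.1, p.2.1) then 1 else 0)
    + (if q = (p.2.1, p.1, p.2.2) then 1 else 0)
    + (if q = (p.2.2, p.2.1, p.1) then 1 else 0)
    + (if q = (p.1, p.2.2, p.2.1) then 1 else 0)

/-- diagonal projector onto distinct triples -/
def Dm : Matrix (Fin d × Fin d × Fin d) (Fin d × Fin d × Fin d) ℂ :=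
  Matrix.diagonal fun p => if p.1 ≠ p.2.1 ∧ p.2.1 ≠ p.2.2 ∧ p.1 ≠ p.2.2 then (1:ℂ) else 0

lemma Tm_apply (a b c x y z : Fin d) :
    Tm d (a,b,c) (x,y,z) =
      (if (x,y,z) = ((a,b,c) : Fin d × Fin d × Fin d) then (1:ℂ) else 0)
      + (if (x,y,z) = ((b,c,a) : Fin d × Fin d × Fin d) then 1 else 0)
      + (if (x,y,z) = ((c,a,b) : Fin d × Fin d × Fin d) then 1 else 0)
      + (if (x,y,z) = ((b,a,c) : Fin d × Fin d × Fin d) then 1 else 0)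
      + (if (x,y,z) = ((c,b,a) : Fin d × Fin d × Fin d) then 1 else 0)
      + (if (x,y,z) = ((a,c,b) : Fin d × Fin d × Fin d) then 1 else 0) := rfl

lemma M_apply (a b c x y z : Fin d) :
    (Y4 d + Y5 d + Y6 d) (a,b,c) (x,y,z) =
      if a ≠ b ∧ b ≠ c ∧ a ≠ c then Tm d (a,b,c) (x,y,z) else 0 := by
  have h4 : Y4 d (a,b,c) (x,y,z) = if a ≠ b ∧ b ≠ c ∧ a ≠ c then
      (if (x,y,z) = ((a,b,c) : Fin d × Fin d × Fin d) then (1:ℂ) else 0) else 0 := by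
    rw [Y4]; simp only [Matrix.sum_apply]
    rw [triple_collapse _ a b c]
    · simp only [ite_entry, E3, Matrix.single, Matrix.of_apply, Matrix.zero_apply]
      simp [eq_comm]
    · intro i k l hne
      simp only [ite_entry, E3, Matrix.single, Matrix.of_apply, Matrix.zero_apply,
        Prod.mk.injEq]
      split_ifs with h1 h2 <;> try rfl
      exact absurd ⟨h2.1.1, h2.1.2.1, h2.1.2.2⟩ hne
  have h5 : Y5 d (a,b,c) (x,y,z) = if a ≠ b ∧ b ≠ c ∧ a ≠ c then
      ((if (x,y,z) = ((b,c,a) : Fin d × Fin d × Fin d) then (1:ℂ) else 0)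
       + (if (x,y,z) = ((c,a,b) : Fin d × Fin d × Fin d) then 1 else 0)) else 0 := by
    rw [Y5]; simp only [Matrix.sum_apply]
    rw [triple_collapse _ a b c]
    · simp only [ite_entry, Matrix.add_apply, E3, Matrix.single, Matrix.of_apply,
        Matrix.zero_apply]
      simp [eq_comm]
    · intro i k l hne
      simp only [ite_entry, Matrix.add_apply, E3, Matrix.single, Matrix.of_apply,
        Matrix.zero_apply, Prod.mk.injEq]
      split_ifs <;> simp_all
  have h6 : Y6 d (a,b,c) (x,y,z) = if a ≠ b ∧ b ≠ c ∧ a ≠ c then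
      ((if (x,y,z) = ((b,a,c) : Fin d × Fin d × Fin d) then (1:ℂ) else 0)
       + (if (x,y,z) = ((c,b,a) : Fin d × Fin d × Fin d) then 1 else 0)
       + (if (x,y,z) = ((a,c,b) : Fin d × Fin d × Fin d) then 1 else 0)) else 0 := by
    rw [Y6]; simp only [Matrix.sum_apply]
    rw [triple_collapse _ a b c]
    · simp only [ite_entry, Matrix.add_apply, E3, Matrix.single, Matrix.of_apply,
        Matrix.zero_apply]
      simp [eq_comm]
    · intro i k l hne
      simp only [ite_entry, Matrix.add_apply, E3, Matrix.single, Matrix.of_apply,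
        Matrix.zero_apply, Prod.mk.injEq]
      split_ifs <;> simp_all
  rw [Matrix.add_apply, Matrix.add_apply, h4, h5, h6, Tm_apply]
  split_ifs <;> ring

lemma Tm_herm : (Tm d).IsHermitian := by
  ext ⟨a,b,c⟩ ⟨x,y,z⟩
  simp only [Matrix.conjTranspose_apply, Tm, Matrix.of_apply, star_add,
    apply_ite (star : ℂ → ℂ), star_one, star_zero]
  have h1 : (((a,b,c) : Fin d × Fin d × Fin d) = (x,y,z)) ↔
      (((x,y,z) : Fin d × Fin d × Fin d) = (a,b,c)) := eq_comm
  have h2 : (((a,b,c) : Fin d × Fin d × Fin d) = (y,z,x)) ↔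
      (((x,y,z) : Fin d × Fin d × Fin d) = (c,a,b)) := by
    simp only [Prod.mk.injEq]; constructor <;> rintro ⟨rfl,rfl,rfl⟩ <;> simp
  have h3 : (((a,b,c) : Fin d × Fin d × Fin d) = (z,x,y)) ↔
      (((x,y,z) : Fin d × Fin d × Fin d) = (b,c,a)) := by
    simp only [Prod.mk.injEq]; constructor <;> rintro ⟨rfl,rfl,rfl⟩ <;> simp
  have h4 : (((a,b,c) : Fin d × Fin d × Fin d) = (y,x,z)) ↔
      (((x,y,z) : Fin d × Fin d × Fin d) = (b,a,c)) := by
    simp only [Prod.mk.injEq]; constructor <;> rintro ⟨rfl,rfl,rfl⟩ <;> simp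
  have h5 : (((a,b,c) : Fin d × Fin d × Fin d) = (z,y,x)) ↔
      (((x,y,z) : Fin d × Fin d × Fin d) = (c,b,a)) := by
    simp only [Prod.mk.injEq]; constructor <;> rintro ⟨rfl,rfl,rfl⟩ <;> simp
  have h6 : (((a,b,c) : Fin d × Fin d × Fin d) = (x,z,y)) ↔
      (((x,y,z) : Fin d × Fin d × Fin d) = (a,c,b)) := by
    simp only [Prod.mk.injEq]; constructor <;> rintro ⟨rfl,rfl,rfl⟩ <;> simp
  simp only [h1, h2, h3, h4, h5, h6]
  ring

lemma Tm_mul_Tm : Tm d * Tm d = (6:ℂ) • Tm d := by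
  ext ⟨a,b,c⟩ ⟨x,y,z⟩
  simp only [Matrix.mul_apply, Tm, Matrix.of_apply, Matrix.smul_apply]
  simp only [add_mul, ite_mul, one_mul, zero_mul, Finset.sum_add_distrib,
    Finset.sum_ite_eq', Finset.mem_univ, if_true]
  ring_nf

lemma psd_smul {n : Type*} [Fintype n] {A : Matrix n n ℂ} (hA : A.PosSemidef)
    (r : ℝ) (hr : 0 ≤ r) : ((r:ℂ) • A).PosSemidef := by
  refine ⟨?_, fun x => ?_⟩
  · have : ((r:ℂ) • A)ᴴ = star (r:ℂ) • Aᴴ := Matrix.conjTranspose_smul _ _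
    rw [Matrix.IsHermitian, this, hA.1.eq, Complex.star_def, Complex.conj_ofReal]
  · have hs : (x.sum fun i xi => x.sum fun j xj => star xi * ((r:ℂ) • A) i j * xj)
        = (r:ℂ) * (x.sum fun i xi => x.sum fun j xj => star xi * A i j * xj) := by
      simp only [Finsupp.sum, Finset.mul_sum, Matrix.smul_apply, smul_eq_mul]
      exact Finset.sum_congr rfl fun i _ => Finset.sum_congr rfl fun j _ => by ring
    rw [hs]
    have hr' : (0:ℂ) ≤ (r:ℂ) := by exact_mod_cast hr
    exact mul_nonneg hr' (hA.2 x)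

lemma Tm_psd : (Tm d).PosSemidef := by
  have h1 : Tm d * (Tm d)ᴴ = (6:ℂ) • Tm d := by rw [(Tm_herm d).eq, Tm_mul_Tm]
  have h2 : Tm d = (((6:ℝ)⁻¹ : ℝ) : ℂ) • (Tm d * (Tm d)ᴴ) := by
    rw [h1, smul_smul]
    norm_num
  rw [h2]
  exact psd_smul (Matrix.posSemidef_self_mul_conjTranspose _) _ (by norm_num)

lemma Dm_herm : (Dm d)ᴴ = Dm d := by
  ext p q
  simp only [Matrix.conjTranspose_apply, Dm, Matrix.diagonal_apply]
  split_ifs <;> simp_all [apply_ite (star : ℂ → ℂ)]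

lemma key : Y4 d + Y5 d + Y6 d = Dm d * Tm d * Dm d := by
  ext ⟨a,b,c⟩ ⟨x,y,z⟩
  rw [M_apply, Dm, Matrix.mul_diagonal, Matrix.diagonal_mul]
  by_cases hD1 : a ≠ b ∧ b ≠ c ∧ a ≠ c
  · obtain ⟨u1, u2, u3⟩ := hD1
    simp only [u1, u2, u3, ne_eq, not_false_iff, and_self, if_true, one_mul, if_pos,
      not_false_eq_true]
    by_cases hD2 : ¬x = y ∧ ¬y = z ∧ ¬x = z
    · simp [hD2]
    · have hT : Tm d (a,b,c) (x,y,z) = 0 := by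
        rw [Tm_apply]
        have n1 : ¬((x,y,z) = ((a,b,c) : Fin d × Fin d × Fin d)) := by
          rintro h; rw [Prod.mk.injEq, Prod.mk.injEq] at h; obtain ⟨rfl, rfl, rfl⟩ := h
          exact hD2 ⟨u1, u2, u3⟩
        have n2 : ¬((x,y,z) = ((b,c,a) : Fin d × Fin d × Fin d)) := by
          rintro h; rw [Prod.mk.injEq, Prod.mk.injEq] at h; obtain ⟨rfl, rfl, rfl⟩ := h
          exact hD2 ⟨u2, fun h => u3 h.symm, fun h => u1 h.symm⟩
        have n3 : ¬((x,y,z) = ((c,a,b) : Fin d × Fin d × Fin d)) := by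
          rintro h; rw [Prod.mk.injEq, Prod.mk.injEq] at h; obtain ⟨rfl, rfl, rfl⟩ := h
          exact hD2 ⟨fun h => u3 h.symm, u1, fun h => u2 h.symm⟩
        have n4 : ¬((x,y,z) = ((b,a,c) : Fin d × Fin d × Fin d)) := by
          rintro h; rw [Prod.mk.injEq, Prod.mk.injEq] at h; obtain ⟨rfl, rfl, rfl⟩ := h
          exact hD2 ⟨fun h => u1 h.symm, u3, u2⟩
        have n5 : ¬((x,y,z) = ((c,b,a) : Fin d × Fin d × Fin d)) := by
          rintro h; rw [Prod.mk.injEq, Prod.mk.injEq] at h; obtain ⟨rfl, rfl, rfl⟩ := h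
          exact hD2 ⟨fun h => u2 h.symm, fun h => u1 h.symm, fun h => u3 h.symm⟩
        have n6 : ¬((x,y,z) = ((a,c,b) : Fin d × Fin d × Fin d)) := by
          rintro h; rw [Prod.mk.injEq, Prod.mk.injEq] at h; obtain ⟨rfl, rfl, rfl⟩ := h
          exact hD2 ⟨u3, fun h => u2 h.symm, u1⟩
        simp [n1, n2, n3, n4, n5, n6]
      simp [hT]
  · simp only [ne_eq] at hD1 ⊢
    rw [if_neg hD1, if_neg (by exact hD1), zero_mul, zero_mul]

lemma count2 (hd : 3 ≤ d) (i : Fin d) :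
    (∑ j : Fin d, ∑ k : Fin d, if ¬i = j ∧ ¬j = k ∧ ¬i = k then (1:ℂ) else 0)
      = ((d:ℂ) - 1) * ((d:ℂ) - 2) := by
  have inner : ∀ j : Fin d, ¬i = j →
      (∑ k : Fin d, if ¬i = j ∧ ¬j = k ∧ ¬i = k then (1:ℂ) else 0) = (d:ℂ) - 2 := by
    intro j hj
    simp only [hj, not_false_iff, true_and]
    rw [Finset.sum_boole]
    have hfil : Finset.filter (fun k => ¬j = k ∧ ¬i = k) Finset.univ
        = Finset.univ \ {j, i} := by
      ext k
      simp [not_or, eq_comm]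
    rw [hfil, Finset.card_sdiff_of_subset (by simp)]
    have hcard : ({j, i} : Finset (Fin d)).card = 2 := by
      rw [Finset.card_insert_of_notMem (by simp; intro h; exact hj h.symm),
        Finset.card_singleton]
    rw [hcard, Finset.card_univ, Fintype.card_fin, Nat.cast_sub (by omega)]
    norm_num
  have step : (∑ j : Fin d, ∑ k : Fin d, if ¬i = j ∧ ¬j = k ∧ ¬i = k then (1:ℂ) else 0)
      = ∑ j : Fin d, (if ¬i = j then ((d:ℂ) - 2) else 0) := by
    apply Finset.sum_congr rfl
    intro j _
    by_cases hj : i = j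
    · simp [hj]
    · rw [if_pos hj, inner j hj]
  rw [step]
  have h2 : (∑ j : Fin d, if ¬i = j then ((d:ℂ) - 2) else 0)
      = (∑ j : Fin d, if ¬i = j then (1:ℂ) else 0) * ((d:ℂ) - 2) := by
    rw [Finset.sum_mul]
    apply Finset.sum_congr rfl
    intro j _
    split_ifs <;> ring
  rw [h2, Finset.sum_boole]
  have hfil : Finset.filter (fun j => ¬i = j) Finset.univ = Finset.univ \ {i} := by
    ext j; simp [eq_comm]
  rw [hfil, Finset.card_sdiff_of_subset (by simp), Finset.card_singleton, Finset.card_univ,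
    Fintype.card_fin, Nat.cast_sub (by omega)]
  norm_num

lemma M_diag (i j k : Fin d) :
    (Y4 d + Y5 d + Y6 d) (i,j,k) (i,j,k)
      = if ¬i = j ∧ ¬j = k ∧ ¬i = k then (1:ℂ) else 0 := by
  rw [M_apply, Tm_apply]
  by_cases hD : ¬i = j ∧ ¬j = k ∧ ¬i = k
  · obtain ⟨u1, u2, u3⟩ := hD
    have v1 : ¬j = i := fun h => u1 h.symm
    have v2 : ¬k = j := fun h => u2 h.symm
    have v3 : ¬k = i := fun h => u3 h.symm
    simp [Prod.mk.injEq, u1, u2, u3, v1, v2, v3]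
  · simp [hD]

lemma M_offdiag (i l : Fin d) (h : ¬i = l) (j k : Fin d) :
    (Y4 d + Y5 d + Y6 d) (i,j,k) (l,j,k) = 0 := by
  rw [M_apply, Tm_apply]
  by_cases hD : ¬i = j ∧ ¬j = k ∧ ¬i = k
  · obtain ⟨u1, u2, u3⟩ := hD
    have v1 : ¬j = i := fun hh => u1 hh.symm
    have v2 : ¬k = j := fun hh => u2 hh.symm
    have v3 : ¬k = i := fun hh => u3 hh.symm
    have w : ¬l = i := fun hh => h hh.symm
    simp [Prod.mk.injEq, u1, u2, u3, v1, v2, v3, w, h]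
  · simp [hD]

lemma single_collapse (u v w : Fin d) :
    (∑ x : Fin d, ∑ y : Fin d, ∑ z : Fin d,
      if (x,y,z) = ((u,v,w) : Fin d × Fin d × Fin d) then (1:ℂ) else 0) = 1 := by
  rw [triple_collapse _ u v w]
  · simp
  · intro x y z hne
    rw [if_neg]
    intro hh
    rw [Prod.mk.injEq, Prod.mk.injEq] at hh
    exact hne ⟨hh.1, hh.2.1, hh.2.2⟩

lemma Tm_rowsum (a b c : Fin d) :
    (∑ x : Fin d, ∑ y : Fin d, ∑ z : Fin d, Tm d (a,b,c) (x,y,z)) = 6 := by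
  simp only [Tm_apply, Finset.sum_add_distrib]
  rw [single_collapse, single_collapse, single_collapse, single_collapse,
    single_collapse, single_collapse]
  norm_num

end TCaux

end Aux

section MainThm

open TCaux

/-- for `d ≥ 3`, `X = (1/((d-1)(d-2)))(X_4 + X_5 + X_6)` is positive
semidefinite, `Tr₂₃ X = 𝟙`, and `Tr[(φ_d^+)^{⊗3} X] = 6/d²`. -/
theorem transpose_cloning_primal (d : ℕ) (hd : 3 ≤ d) :
    ((((d:ℂ) - 1) * ((d:ℂ) - 2))⁻¹ • (Y4 d + Y5 d + Y6 d)).PosSemidef ∧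
    ptrace23 d ((((d:ℂ) - 1) * ((d:ℂ) - 2))⁻¹ • (Y4 d + Y5 d + Y6 d)) = 1 ∧
    (Phi3 d * ((((d:ℂ) - 1) * ((d:ℂ) - 2))⁻¹ • (Y4 d + Y5 d + Y6 d))).trace
      = 6 / (d : ℂ)^2 := by
  have hd1 : ((d:ℂ) - 1) ≠ 0 := by
    rw [sub_ne_zero]
    intro hh; norm_cast at hh; omega
  have hd2 : ((d:ℂ) - 2) ≠ 0 := by
    rw [sub_ne_zero]
    intro hh; norm_cast at hh; omega
  have hd0 : (d:ℂ) ≠ 0 := by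
    norm_cast; omega
  have hprod : ((d:ℂ) - 1) * ((d:ℂ) - 2) ≠ 0 := mul_ne_zero hd1 hd2
  refine ⟨?_, ?_, ?_⟩
  · -- positive semidefinite
    have hdr : (0:ℝ) ≤ (((d:ℝ) - 1) * ((d:ℝ) - 2))⁻¹ := by
      have h3 : (3:ℝ) ≤ (d:ℝ) := by exact_mod_cast hd
      apply inv_nonneg.mpr
      nlinarith
    have hc : ((((d:ℂ) - 1) * ((d:ℂ) - 2))⁻¹)
        = (((((d:ℝ) - 1) * ((d:ℝ) - 2))⁻¹ : ℝ) : ℂ) := by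
      push_cast
      ring
    rw [key d, hc]
    have hpsd : (Dm d * Tm d * Dm d).PosSemidef := by
      have h := (Tm_psd d).conjTranspose_mul_mul_same (Dm d)
      rwa [Dm_herm] at h
    exact psd_smul hpsd _ hdr
  · -- partial trace
    ext i l
    simp only [ptrace23, Matrix.of_apply, Matrix.smul_apply, smul_eq_mul,
      ← Finset.mul_sum]
    by_cases h : i = l
    · subst h
      simp_rw [M_diag]
      rw [count2 d hd i, Matrix.one_apply_eq]
      exact inv_mul_cancel₀ hprod
    · simp_rw [M_offdiag d i l h]
      rw [Matrix.one_apply_ne h]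
      simp
  · -- trace
    have hrow : ∀ q : Fin d × Fin d × Fin d,
        (∑ p : Fin d × Fin d × Fin d, (Y4 d + Y5 d + Y6 d) q p)
          = if ¬q.1 = q.2.1 ∧ ¬q.2.1 = q.2.2 ∧ ¬q.1 = q.2.2 then (6:ℂ) else 0 := by
      rintro ⟨a, b, c⟩
      rw [Fintype.sum_prod_type]
      simp_rw [Fintype.sum_prod_type]
      simp_rw [M_apply]
      by_cases hD : a ≠ b ∧ b ≠ c ∧ a ≠ c
      · obtain ⟨u1, u2, u3⟩ := hD
        simp only [ne_eq] at u1 u2 u3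
        simp only [ne_eq, u1, u2, u3, not_false_eq_true, and_self, if_true]
        exact Tm_rowsum d a b c
      · simp [hD]
    have hS : (∑ p : Fin d × Fin d × Fin d, ∑ q : Fin d × Fin d × Fin d,
        (Y4 d + Y5 d + Y6 d) q p)
          = 6 * ((d:ℂ) * (((d:ℂ) - 1) * ((d:ℂ) - 2))) := by
      rw [Finset.sum_comm]
      simp_rw [hrow]
      rw [Fintype.sum_prod_type]
      simp_rw [Fintype.sum_prod_type]
      have inner6 : ∀ a : Fin d,
          (∑ b : Fin d, ∑ c : Fin d, if ¬a = b ∧ ¬b = c ∧ ¬a = c then (6:ℂ) else 0)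
            = 6 * (((d:ℂ) - 1) * ((d:ℂ) - 2)) := by
        intro a
        rw [← count2 d hd a, Finset.mul_sum]
        apply Finset.sum_congr rfl
        intro b _
        rw [Finset.mul_sum]
        apply Finset.sum_congr rfl
        intro c _
        split_ifs <;> ring
      simp_rw [inner6]
      rw [Finset.sum_const, Finset.card_univ, Fintype.card_fin, nsmul_eq_mul]
      ring
    simp only [Matrix.trace, Matrix.diag_apply, Matrix.mul_apply, Phi3, Matrix.of_apply,
      Matrix.smul_apply, smul_eq_mul]
    simp_rw [← mul_assoc]
    simp_rw [← Finset.mul_sum]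
    rw [hS]
    field_simp

end MainThm
end
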